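/- arXiv:1808.00181 — 10 statements merged into one kernel-verified Lean document; each statement's English description precedes it below -/
import Mathlib

section
/- Let A and B be positive definite n×n complex matrices and X an arbitrary n×n complex matrix. If the operator norm of the 2×2 block matrix H = [[A, X], [X*, B]] satisfies ||H|| > ||A + B||, then ||A + X A⁻¹ X*|| ≥ ||H|| > ||A + B||. -/
open scoped Matrix ComplexOrder

/-- The operator norm (largest singular value) of a square complex matrix. -/
noncomputable def opNorm {m : Type*} [Fintype m] [DecidableEq m] (M : Matrix m m ℂ) : ℝ :=
  ‖Matrix.toEuclideanCLM (𝕜 := ℂ) M‖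

set_option maxHeartbeats 1000000

open scoped InnerProductSpace
open Matrix ContinuousLinearMap

namespace Stmt0Aux

variable {m : Type*} [Fintype m] [DecidableEq m]

noncomputable abbrev Phi (M : Matrix m m ℂ) : EuclideanSpace ℂ m →L[ℂ] EuclideanSpace ℂ m :=
  Matrix.toEuclideanCLM (𝕜 := ℂ) M

lemma inner_Phi (M : Matrix m m ℂ) (y : EuclideanSpace ℂ m) :
    ⟪Phi M y, y⟫_ℂ = star (M *ᵥ (WithLp.equiv 2 _ y)) ⬝ᵥ (WithLp.equiv 2 _ y) := by
  rw [EuclideanSpace.inner_eq_star_dotProduct, dotProduct_comm]; rfl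

lemma re_inner_Phi (M : Matrix m m ℂ) (y : EuclideanSpace ℂ m) :
    RCLike.re ⟪Phi M y, y⟫_ℂ
      = (star ((WithLp.equiv 2 _ y)) ⬝ᵥ (M *ᵥ (WithLp.equiv 2 _ y))).re := by
  rw [inner_Phi, Matrix.star_dotProduct]
  simp

lemma isPositive_Phi {M : Matrix m m ℂ} (h : M.PosSemidef) : (Phi M).IsPositive := by
  refine isPositive_def'.mpr ⟨?_, ?_⟩
  · rw [_root_.isSelfAdjoint_iff, ← map_star, Matrix.star_eq_conjTranspose, h.1.eq]
  · intro y
    have h2 := h.dotProduct_mulVec_nonneg (WithLp.equiv 2 _ y)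
    rw [Complex.le_def] at h2
    rw [reApplyInnerSelf_apply, re_inner_Phi]
    simpa using h2.1

lemma Phi_nonneg {M : Matrix m m ℂ} (h : M.PosSemidef) : 0 ≤ Phi M :=
  (nonneg_iff_isPositive _).mpr (isPositive_Phi h)

lemma Phi_le_Phi {M N : Matrix m m ℂ} (h : (N - M).PosSemidef) : Phi M ≤ Phi N := by
  rw [le_def, ← map_sub]
  exact isPositive_Phi h

lemma re_dot_le_of_le {M N : Matrix m m ℂ} (h : Phi M ≤ Phi N) (u : m → ℂ) :
    (star u ⬝ᵥ (M *ᵥ u)).re ≤ (star u ⬝ᵥ (N *ᵥ u)).re := by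
  have h' := ((le_def (Phi M) (Phi N)).mp h).2 ((WithLp.equiv 2 _).symm u)
  rw [reApplyInnerSelf_apply, ContinuousLinearMap.sub_apply, inner_sub_left,
    map_sub] at h'
  have hM := re_inner_Phi M ((WithLp.equiv 2 _).symm u)
  have hN := re_inner_Phi N ((WithLp.equiv 2 _).symm u)
  simp only [Equiv.apply_symm_apply] at hM hN
  rw [hM, hN] at h'
  linarith

lemma re_dot_nonneg {M : Matrix m m ℂ} (h : M.PosSemidef) (u : m → ℂ) :
    0 ≤ (star u ⬝ᵥ (M *ᵥ u)).re := by
  have h2 := h.dotProduct_mulVec_nonneg u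
  rw [Complex.le_def] at h2
  simpa using h2.1

lemma algebraMap_eq_Phi (r : ℝ) :
    algebraMap ℝ (EuclideanSpace ℂ m →L[ℂ] EuclideanSpace ℂ m) r
      = Phi ((r : ℂ) • (1 : Matrix m m ℂ)) := by
  have h1 := _root_.map_smul (Matrix.toEuclideanCLM (𝕜 := ℂ) (n := m)) ((r : ℂ))
    (1 : Matrix m m ℂ)
  rw [show Phi ((r : ℂ) • (1 : Matrix m m ℂ))
      = Matrix.toEuclideanCLM (𝕜 := ℂ) ((r : ℂ) • (1 : Matrix m m ℂ)) from rfl, h1, _root_.map_one,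
    IsScalarTower.algebraMap_apply ℝ ℂ (EuclideanSpace ℂ m →L[ℂ] EuclideanSpace ℂ m),
    Algebra.algebraMap_eq_smul_one]
  norm_num

lemma smul_one_posSemidef {r : ℝ} (hr : 0 ≤ r) :
    ((r : ℂ) • (1 : Matrix m m ℂ)).PosSemidef := by
  have h1 : (1 : Matrix m m ℂ).PosSemidef := Matrix.PosSemidef.one
  refine Matrix.PosSemidef.of_dotProduct_mulVec_nonneg ?_ ?_
  · rw [IsHermitian, conjTranspose_smul, h1.1.eq]
    congr 1
    simp [Complex.ext_iff]
  · intro x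
    have := h1.dotProduct_mulVec_nonneg x
    rw [Matrix.smul_mulVec, dotProduct_smul, smul_eq_mul]
    positivity

lemma algebraMap_le_algebraMap' {r s : ℝ} (h : r ≤ s) :
    algebraMap ℝ (EuclideanSpace ℂ m →L[ℂ] EuclideanSpace ℂ m) r
      ≤ algebraMap ℝ (EuclideanSpace ℂ m →L[ℂ] EuclideanSpace ℂ m) s := by
  rw [algebraMap_eq_Phi, algebraMap_eq_Phi]
  refine Phi_le_Phi ?_
  have : (s : ℂ) • (1 : Matrix m m ℂ) - (r : ℂ) • 1 = ((s - r : ℝ) : ℂ) • 1 := by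
    rw [← sub_smul]; norm_num
  rw [this]
  exact smul_one_posSemidef (by linarith)

lemma exists_eigenvector {H : Matrix m m ℂ} {c : ℝ} (hc : c ∈ spectrum ℝ (Phi H)) :
    ∃ w : m → ℂ, w ≠ 0 ∧ H *ᵥ w = (c : ℂ) • w := by
  rw [spectrum.mem_iff] at hc
  have hunit : ¬ IsUnit ((c : ℂ) • (1 : Matrix m m ℂ) - H) := by
    intro h
    apply hc
    have h2 := h.map (Matrix.toEuclideanCLM (𝕜 := ℂ))
    rw [map_sub] at h2
    rw [algebraMap_eq_Phi]
    exact h2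
  have hdet : ((c : ℂ) • (1 : Matrix m m ℂ) - H).det = 0 := by
    by_contra hd
    exact hunit ((Matrix.isUnit_iff_isUnit_det _).mpr (Ne.isUnit hd))
  obtain ⟨w, hw0, hww⟩ := (Matrix.exists_mulVec_eq_zero_iff).mpr hdet
  refine ⟨w, hw0, ?_⟩
  rw [Matrix.sub_mulVec, Matrix.smul_mulVec, Matrix.one_mulVec, sub_eq_zero] at hww
  exact hww.symm

lemma dot_self_re_pos {u : m → ℂ} (hu : u ≠ 0) : 0 < (star u ⬝ᵥ u).re := by
  have h1 : (star u ⬝ᵥ u) = ⟪(WithLp.equiv 2 (m → ℂ)).symm u, (WithLp.equiv 2 _).symm u⟫_ℂ :=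
    by rw [EuclideanSpace.inner_toLp_toLp, dotProduct_comm]; rfl
  have h2 : ((WithLp.equiv 2 (m → ℂ)).symm u) ≠ 0 := by
    intro h
    apply hu
    have := congrArg (WithLp.equiv 2 (m → ℂ)) h
    simpa using this
  have := inner_self_eq_norm_sq (𝕜 := ℂ) ((WithLp.equiv 2 (m → ℂ)).symm u)
  rw [h1]
  have h3 : RCLike.re ⟪(WithLp.equiv 2 (m → ℂ)).symm u, (WithLp.equiv 2 _).symm u⟫_ℂ
      = (⟪(WithLp.equiv 2 (m → ℂ)).symm u, (WithLp.equiv 2 _).symm u⟫_ℂ).re := rfl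
  rw [h3] at this
  rw [this]
  have h4 := norm_pos_iff.mpr h2
  positivity

lemma Phi_isSelfAdjoint {M : Matrix m m ℂ} (h : M.IsHermitian) :
    _root_.IsSelfAdjoint (Phi M) := by
  rw [_root_.IsSelfAdjoint, ← map_star, Matrix.star_eq_conjTranspose, h.eq]

lemma Phi_conjTranspose (M : Matrix m m ℂ) : Phi Mᴴ = star (Phi M) := by
  rw [← Matrix.star_eq_conjTranspose]
  exact map_star (Matrix.toEuclideanCLM (𝕜 := ℂ) (n := m)) M

lemma isUnit_of_Phi {M : Matrix m m ℂ} (h : IsUnit (Phi M)) : IsUnit M := by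
  have h2 := h.map (Matrix.toEuclideanCLM (𝕜 := ℂ) (n := m)).symm
  simpa using h2

noncomputable def unitPhi {M : Matrix m m ℂ} (h : IsUnit M) :
    (EuclideanSpace ℂ m →L[ℂ] EuclideanSpace ℂ m)ˣ where
  val := Phi M
  inv := Phi M⁻¹
  val_inv := by
    rw [← _root_.map_mul, Matrix.mul_nonsing_inv _ ((Matrix.isUnit_iff_isUnit_det _).mp h), _root_.map_one]
  inv_val := by
    rw [← _root_.map_mul, Matrix.nonsing_inv_mul _ ((Matrix.isUnit_iff_isUnit_det _).mp h), _root_.map_one]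

lemma conj_inv_le {A D : Matrix m m ℂ} (X : Matrix m m ℂ) (hA : A.PosDef)
    (hAD : Phi A ≤ Phi D) :
    IsUnit D ∧ Phi (X * D⁻¹ * Xᴴ) ≤ Phi (X * A⁻¹ * Xᴴ) := by
  have hAu : IsUnit A := hA.isUnit
  have hDu' : IsUnit (Phi D) := CStarAlgebra.isUnit_of_le (Phi A) hAD
    ((unitPhi hAu).isUnit.isStrictlyPositive (Phi_nonneg hA.posSemidef))
  have hDu : IsUnit D := isUnit_of_Phi hDu'
  refine ⟨hDu, ?_⟩
  have hinv : Phi D⁻¹ ≤ Phi A⁻¹ := by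
    have h := CStarAlgebra.inv_le_inv (a := unitPhi hAu) (b := unitPhi hDu)
      (Phi_nonneg hA.posSemidef) hAD
    exact h
  have h2 : Phi X * Phi D⁻¹ * star (Phi X) ≤ Phi X * Phi A⁻¹ * star (Phi X) :=
    star_right_conjugate_le_conjugate hinv (Phi X)
  have e1 : ∀ P Q : Matrix m m ℂ, Phi (P * Q) = Phi P * Phi Q := fun P Q =>
    _root_.map_mul (Matrix.toEuclideanCLM (𝕜 := ℂ) (n := m)) P Q
  rw [e1, e1, e1, e1, Phi_conjTranspose]
  exact h2

lemma re_dot_smul (r : ℝ) (u : m → ℂ) :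
    (star u ⬝ᵥ ((r : ℂ) • u)).re = r * (star u ⬝ᵥ u).re := by
  rw [dotProduct_smul, smul_eq_mul, Complex.re_ofReal_mul]

lemma re_dot_le_smul_one {M : Matrix m m ℂ} {r : ℝ}
    (h : Phi M ≤ algebraMap ℝ (EuclideanSpace ℂ m →L[ℂ] EuclideanSpace ℂ m) r) (u : m → ℂ) :
    (star u ⬝ᵥ (M *ᵥ u)).re ≤ r * (star u ⬝ᵥ u).re := by
  rw [algebraMap_eq_Phi] at h
  have h2 := re_dot_le_of_le h u
  rwa [Matrix.smul_mulVec, Matrix.one_mulVec, re_dot_smul] at h2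


lemma opNorm_zero' : _root_.opNorm (0 : Matrix m m ℂ) = 0 := by
  have h0 : Phi (0 : Matrix m m ℂ) = 0 :=
    _root_.map_zero (Matrix.toEuclideanCLM (𝕜 := ℂ) (n := m))
  rw [show _root_.opNorm (0 : Matrix m m ℂ) = ‖Phi (0 : Matrix m m ℂ)‖ from rfl, h0, norm_zero]

lemma eig_le_norm {B : Matrix m m ℂ} (hB : B.IsHermitian) {t : ℝ} {v : m → ℂ} (hv : v ≠ 0)
    (hBv : B *ᵥ v = ((t : ℝ) : ℂ) • v) : t ≤ ‖Phi B‖ := by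
  have h4 := re_dot_le_smul_one ((Phi_isSelfAdjoint hB).le_algebraMap_norm_self) v
  rw [hBv, re_dot_smul] at h4
  exact le_of_mul_le_mul_right h4 (dot_self_re_pos hv)

lemma eig_nonneg {B : Matrix m m ℂ} (hB : B.PosSemidef) {c : ℝ} {v : m → ℂ} (hv : v ≠ 0)
    (hBv : B *ᵥ v = ((c : ℝ) : ℂ) • v) : 0 ≤ c := by
  have h4 : 0 ≤ (star v ⬝ᵥ (B *ᵥ v)).re := re_dot_nonneg hB v
  rw [hBv, re_dot_smul] at h4
  have hdv := dot_self_re_pos hv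
  by_contra hc
  push_neg at hc
  nlinarith

lemma key_common (A X : Matrix m m ℂ) (hA : A.PosDef) {D : Matrix m m ℂ}
    (hAD : Phi A ≤ Phi D) (u : m → ℂ) :
    (star u ⬝ᵥ (A *ᵥ u)).re + (star u ⬝ᵥ ((X * D⁻¹ * Xᴴ) *ᵥ u)).re
      ≤ ‖Phi (A + X * A⁻¹ * Xᴴ)‖ * (star u ⬝ᵥ u).re := by
  have hGherm : (A + X * A⁻¹ * Xᴴ).IsHermitian :=
    hA.1.add (Matrix.isHermitian_mul_mul_conjTranspose X hA.1.inv)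
  have hG_le : Phi (A + X * A⁻¹ * Xᴴ)
      ≤ algebraMap ℝ (EuclideanSpace ℂ m →L[ℂ] EuclideanSpace ℂ m) ‖Phi (A + X * A⁻¹ * Xᴴ)‖ :=
    (Phi_isSelfAdjoint hGherm).le_algebraMap_norm_self
  have hXA_le_G : Phi (X * A⁻¹ * Xᴴ) ≤ Phi (A + X * A⁻¹ * Xᴴ) :=
    Phi_le_Phi (by simpa using hA.posSemidef)
  obtain ⟨hDu, hconj⟩ := conj_inv_le X hA hAD
  have h10 := re_dot_le_of_le hconj u
  have h12 := re_dot_le_smul_one hG_le u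
  have hGsplit : (star u ⬝ᵥ ((A + X * A⁻¹ * Xᴴ) *ᵥ u)).re
      = (star u ⬝ᵥ (A *ᵥ u)).re + (star u ⬝ᵥ ((X * A⁻¹ * Xᴴ) *ᵥ u)).re := by
    rw [Matrix.add_mulVec, dotProduct_add, Complex.add_re]
  linarith

lemma key_plus (A B X : Matrix m m ℂ) (hA : A.PosDef) (hB : B.PosDef) (t : ℝ)
    (hABt : Phi (A + B) ≤ algebraMap ℝ (EuclideanSpace ℂ m →L[ℂ] EuclideanSpace ℂ m) t)
    (u v : m → ℂ) (hu0 : u ≠ 0)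
    (hE1 : A *ᵥ u + X *ᵥ v = ((t : ℝ) : ℂ) • u)
    (hE2 : Xᴴ *ᵥ u + B *ᵥ v = ((t : ℝ) : ℂ) • v) :
    t ≤ ‖Phi (A + X * A⁻¹ * Xᴴ)‖ := by
  have hadd : ∀ P Q : Matrix m m ℂ, Phi (P + Q) = Phi P + Phi Q := fun P Q =>
    _root_.map_add (Matrix.toEuclideanCLM (𝕜 := ℂ) (n := m)) P Q
  have hsub : ∀ P Q : Matrix m m ℂ, Phi (P - Q) = Phi P - Phi Q := fun P Q =>
    _root_.map_sub (Matrix.toEuclideanCLM (𝕜 := ℂ) (n := m)) P Q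
  set D := ((t : ℝ) : ℂ) • (1 : Matrix m m ℂ) - B with hD
  have hAD : Phi A ≤ Phi D := by
    have h6 : Phi D = algebraMap ℝ (EuclideanSpace ℂ m →L[ℂ] EuclideanSpace ℂ m) t - Phi B := by
      rw [hD, hsub, algebraMap_eq_Phi]
    have h7 : Phi A + Phi B ≤ algebraMap ℝ (EuclideanSpace ℂ m →L[ℂ] EuclideanSpace ℂ m) t := by
      rw [← hadd]
      exact hABt
    rw [h6]
    exact le_sub_iff_add_le.mpr h7
  have hDu : IsUnit D := (conj_inv_le X hA hAD).1
  have hDdet : IsUnit D.det := (Matrix.isUnit_iff_isUnit_det D).mp hDu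
  have hDv : D *ᵥ v = Xᴴ *ᵥ u := by
    rw [hD, Matrix.sub_mulVec, Matrix.smul_mulVec, Matrix.one_mulVec,
      sub_eq_iff_eq_add', ← hE2]
    abel
  have hv2 : v = D⁻¹ *ᵥ (Xᴴ *ᵥ u) := by
    rw [← hDv, Matrix.mulVec_mulVec, Matrix.nonsing_inv_mul D hDdet, Matrix.one_mulVec]
  have hXv : X *ᵥ v = (X * D⁻¹ * Xᴴ) *ᵥ u := by
    rw [hv2, Matrix.mulVec_mulVec, Matrix.mulVec_mulVec]
  have hdot : (star u ⬝ᵥ (A *ᵥ u)).re + (star u ⬝ᵥ ((X * D⁻¹ * Xᴴ) *ᵥ u)).re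
      = t * (star u ⬝ᵥ u).re := by
    have h3 := congrArg (fun y => (star u ⬝ᵥ y).re) hE1
    simp only [dotProduct_add, Complex.add_re, hXv, re_dot_smul] at h3
    exact h3
  have hkey := key_common A X hA hAD u
  have hAnn : 0 ≤ (star u ⬝ᵥ (A *ᵥ u)).re := re_dot_nonneg hA.posSemidef u
  have hdu := dot_self_re_pos hu0
  have hfin : t * (star u ⬝ᵥ u).re ≤ ‖Phi (A + X * A⁻¹ * Xᴴ)‖ * (star u ⬝ᵥ u).re := by
    linarith
  exact le_of_mul_le_mul_right hfin hdu

lemma key_minus (A B X : Matrix m m ℂ) (hA : A.PosDef) (hB : B.PosDef) (t : ℝ)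
    (hABt : Phi (A + B) ≤ algebraMap ℝ (EuclideanSpace ℂ m →L[ℂ] EuclideanSpace ℂ m) t)
    (u v : m → ℂ) (hu0 : u ≠ 0)
    (hE1 : A *ᵥ u + X *ᵥ v = ((-t : ℝ) : ℂ) • u)
    (hE2 : Xᴴ *ᵥ u + B *ᵥ v = ((-t : ℝ) : ℂ) • v) :
    t ≤ ‖Phi (A + X * A⁻¹ * Xᴴ)‖ := by
  have hadd : ∀ P Q : Matrix m m ℂ, Phi (P + Q) = Phi P + Phi Q := fun P Q =>
    _root_.map_add (Matrix.toEuclideanCLM (𝕜 := ℂ) (n := m)) P Q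
  set D := ((t : ℝ) : ℂ) • (1 : Matrix m m ℂ) + B with hD
  have hAD : Phi A ≤ Phi D := by
    have h6 : Phi D = algebraMap ℝ (EuclideanSpace ℂ m →L[ℂ] EuclideanSpace ℂ m) t + Phi B := by
      rw [hD, hadd, algebraMap_eq_Phi]
    have h7 : Phi A ≤ algebraMap ℝ (EuclideanSpace ℂ m →L[ℂ] EuclideanSpace ℂ m) t :=
      le_trans (le_trans (Phi_le_Phi (by simpa using hB.posSemidef)) hABt) (le_refl _)
    rw [h6]
    exact le_trans h7 (le_add_of_nonneg_right (Phi_nonneg hB.posSemidef))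
  have hDu : IsUnit D := (conj_inv_le X hA hAD).1
  have hDdet : IsUnit D.det := (Matrix.isUnit_iff_isUnit_det D).mp hDu
  have hE2' : Xᴴ *ᵥ u + B *ᵥ v = -(((t : ℝ) : ℂ) • v) := by
    rw [hE2]; push_cast; rw [neg_smul]
  have hDv : D *ᵥ v = -(Xᴴ *ᵥ u) := by
    rw [hD, Matrix.add_mulVec, Matrix.smul_mulVec, Matrix.one_mulVec,
      eq_neg_iff_add_eq_zero]
    rw [eq_neg_iff_add_eq_zero] at hE2'
    calc ((t : ℝ) : ℂ) • v + B *ᵥ v + Xᴴ *ᵥ u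
        = Xᴴ *ᵥ u + B *ᵥ v + ((t : ℝ) : ℂ) • v := by abel
      _ = 0 := hE2'
  have hv2 : v = -(D⁻¹ *ᵥ (Xᴴ *ᵥ u)) := by
    have h7 := congrArg (fun y => D⁻¹ *ᵥ y) hDv
    simpa [Matrix.mulVec_mulVec, Matrix.nonsing_inv_mul D hDdet, Matrix.one_mulVec,
      Matrix.mulVec_neg] using h7
  have hXv : X *ᵥ v = -((X * D⁻¹ * Xᴴ) *ᵥ u) := by
    rw [hv2, Matrix.mulVec_neg, Matrix.mulVec_mulVec, Matrix.mulVec_mulVec]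
  have hdot : (star u ⬝ᵥ ((X * D⁻¹ * Xᴴ) *ᵥ u)).re
      = (star u ⬝ᵥ (A *ᵥ u)).re + t * (star u ⬝ᵥ u).re := by
    have h3 := congrArg (fun y => (star u ⬝ᵥ y).re) hE1
    simp only [dotProduct_add, Complex.add_re, hXv, re_dot_smul,
      dotProduct_neg, Complex.neg_re] at h3
    linarith
  have hkey := key_common A X hA hAD u
  have hAnn : 0 ≤ (star u ⬝ᵥ (A *ᵥ u)).re := re_dot_nonneg hA.posSemidef u
  have hdu := dot_self_re_pos hu0
  have hfin : t * (star u ⬝ᵥ u).re ≤ ‖Phi (A + X * A⁻¹ * Xᴴ)‖ * (star u ⬝ᵥ u).re := by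
    linarith
  exact le_of_mul_le_mul_right hfin hdu

end Stmt0Aux

open Stmt0Aux in
theorem stmt_0 {n : ℕ} (A B X : Matrix (Fin n) (Fin n) ℂ)
    (hA : A.PosDef) (hB : B.PosDef)
    (hH : opNorm (Matrix.fromBlocks A X Xᴴ B) > opNorm (A + B)) :
    opNorm (A + X * A⁻¹ * Xᴴ) ≥ opNorm (Matrix.fromBlocks A X Xᴴ B) ∧
      opNorm (Matrix.fromBlocks A X Xᴴ B) > opNorm (A + B) := by
  refine ⟨?_, hH⟩
  rcases Nat.eq_zero_or_pos n with hn | hn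
  · exfalso
    subst hn
    have hz1 : (Matrix.fromBlocks A X Xᴴ B) = 0 := by
      ext i j; exact (i.elim (fun a => a.elim0) (fun a => a.elim0))
    have hz2 : A + B = 0 := by ext i j; exact i.elim0
    rw [hz1, hz2, opNorm_zero', opNorm_zero'] at hH
    exact lt_irrefl _ hH
  haveI : Nonempty (Fin n) := ⟨⟨0, hn⟩⟩
  classical
  have hABherm : (A + B).IsHermitian := hA.1.add hB.1
  have hHherm : (Matrix.fromBlocks A X Xᴴ B).IsHermitian := by
    unfold Matrix.IsHermitian
    rw [Matrix.fromBlocks_conjTranspose, Matrix.conjTranspose_conjTranspose, hA.1.eq, hB.1.eq]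
  set t := opNorm (Matrix.fromBlocks A X Xᴴ B) with ht
  show t ≤ opNorm (A + X * A⁻¹ * Xᴴ)
  haveI : Nontrivial (EuclideanSpace ℂ (Fin n ⊕ Fin n) →L[ℂ] EuclideanSpace ℂ (Fin n ⊕ Fin n)) := by
    obtain ⟨y, hy⟩ := exists_ne (0 : EuclideanSpace ℂ (Fin n ⊕ Fin n))
    exact ⟨1, 0, fun h => hy (by simpa using congrArg (fun f => f y) h)⟩
  have htAB : opNorm (A + B) < t := hH
  have ht0 : 0 < t :=
    lt_of_le_of_lt (show (0:ℝ) ≤ opNorm (A + B) from norm_nonneg (Phi (A + B))) htAB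
  have hABle : Phi (A + B)
      ≤ algebraMap ℝ (EuclideanSpace ℂ (Fin n) →L[ℂ] EuclideanSpace ℂ (Fin n)) t :=
    le_trans (Phi_isSelfAdjoint hABherm).le_algebraMap_norm_self
      (algebraMap_le_algebraMap' (le_of_lt htAB))
  have hBnorm : ‖Phi B‖ ≤ opNorm (A + B) :=
    CStarAlgebra.norm_le_norm_of_nonneg_of_le (Phi_nonneg hB.posSemidef)
      (Phi_le_Phi (by simpa using hA.posSemidef))
  have hspec := CStarAlgebra.norm_or_neg_norm_mem_spectrum
    (a := Phi (Matrix.fromBlocks A X Xᴴ B)) (Phi_isSelfAdjoint hHherm)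
  rcases hspec with hc | hc
  · have hc' : t ∈ spectrum ℝ (Phi (Matrix.fromBlocks A X Xᴴ B)) := hc
    obtain ⟨w, hw0, hw⟩ := exists_eigenvector hc'
    set u := w ∘ Sum.inl with hudef
    set v := w ∘ Sum.inr with hvdef
    have hwelim : w = Sum.elim u v := by funext i; cases i <;> rfl
    rw [hwelim, Matrix.fromBlocks_mulVec] at hw
    have hE1 : A *ᵥ u + X *ᵥ v = ((t : ℝ) : ℂ) • u := by
      funext i; have h3 := congrFun hw (Sum.inl i); simpa using h3
    have hE2 : Xᴴ *ᵥ u + B *ᵥ v = ((t : ℝ) : ℂ) • v := by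
      funext i; have h3 := congrFun hw (Sum.inr i); simpa using h3
    have hu0 : u ≠ 0 := by
      intro hu0
      have hv0 : v ≠ 0 := by
        intro hv0
        apply hw0
        rw [hwelim, hu0, hv0]
        funext i; cases i <;> rfl
      have hBv : B *ᵥ v = ((t : ℝ) : ℂ) • v := by
        have h5 := hE2; rwa [hu0, Matrix.mulVec_zero, zero_add] at h5
      have h5 : t ≤ ‖Phi B‖ := eig_le_norm hB.1 hv0 hBv
      linarith
    exact key_plus A B X hA hB t hABle u v hu0 hE1 hE2
  · have hc' : (-t) ∈ spectrum ℝ (Phi (Matrix.fromBlocks A X Xᴴ B)) := hc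
    obtain ⟨w, hw0, hw⟩ := exists_eigenvector hc'
    set u := w ∘ Sum.inl with hudef
    set v := w ∘ Sum.inr with hvdef
    have hwelim : w = Sum.elim u v := by funext i; cases i <;> rfl
    rw [hwelim, Matrix.fromBlocks_mulVec] at hw
    have hE1 : A *ᵥ u + X *ᵥ v = ((-t : ℝ) : ℂ) • u := by
      funext i; have h3 := congrFun hw (Sum.inl i); simpa using h3
    have hE2 : Xᴴ *ᵥ u + B *ᵥ v = ((-t : ℝ) : ℂ) • v := by
      funext i; have h3 := congrFun hw (Sum.inr i); simpa using h3
    have hu0 : u ≠ 0 := by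
      intro hu0
      have hv0 : v ≠ 0 := by
        intro hv0
        apply hw0
        rw [hwelim, hu0, hv0]
        funext i; cases i <;> rfl
      have hBv : B *ᵥ v = ((-t : ℝ) : ℂ) • v := by
        have h5 := hE2; rwa [hu0, Matrix.mulVec_zero, zero_add] at h5
      have h5 : 0 ≤ -t := eig_nonneg hB.posSemidef hv0 hBv
      linarith
    exact key_minus A B X hA hB t hABle u v hu0 hE1 hE2
end

section
/- Let A and B be positive definite n×n complex matrices and X an n×n complex matrix with B ≥ X* A⁻¹ X. If the operator norm of the block matrix [[A, X], [X*, B]] is strictly greater than ||A + B||, then ||A + X A⁻¹ X*|| > ||A + X* A⁻¹ X||. -/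
open scoped Matrix ComplexOrder

set_option synthInstance.maxHeartbeats 1000000
set_option maxHeartbeats 1000000
set_option linter.unusedSectionVars false

section Aux
variable {m : Type*} [Fintype m] [DecidableEq m]

lemma nonneg_clm_of_posSemidef {M : Matrix m m ℂ} (hM : M.PosSemidef) :
    0 ≤ Matrix.toEuclideanCLM (𝕜 := ℂ) M := by
  rw [ContinuousLinearMap.nonneg_iff_isPositive]
  exact (ContinuousLinearMap.isPositive_toLinearMap_iff _).mp
    (Matrix.isPositive_toEuclideanLin_iff.mpr hM)

lemma posSemidef_of_nonneg_clm {M : Matrix m m ℂ}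
    (h : 0 ≤ Matrix.toEuclideanCLM (𝕜 := ℂ) M) : M.PosSemidef := by
  rw [ContinuousLinearMap.nonneg_iff_isPositive] at h
  have hherm : M.IsHermitian := by
    have h1 : Matrix.toEuclideanCLM (𝕜 := ℂ) Mᴴ = Matrix.toEuclideanCLM (𝕜 := ℂ) M := by
      rw [← Matrix.star_eq_conjTranspose, map_star]; exact h.isSelfAdjoint
    exact (Matrix.toEuclideanCLM (𝕜 := ℂ)).injective h1
  refine Matrix.PosSemidef.of_dotProduct_mulVec_nonneg hherm fun x => ?_
  set z := star x ⬝ᵥ M *ᵥ x with hzdef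
  have hz : star z = z := by
    rw [hzdef, ← Matrix.star_dotProduct, Matrix.star_mulVec,
      ← Matrix.dotProduct_mulVec, hherm.eq]
  have hre : 0 ≤ z.re := by
    have h2 := h.2 (WithLp.toLp 2 x)
    rw [ContinuousLinearMap.reApplyInnerSelf_apply,
      Matrix.toEuclideanCLM_toLp, EuclideanSpace.inner_eq_star_dotProduct] at h2
    rw [dotProduct_comm] at h2
    have h3 : star (M *ᵥ x) ⬝ᵥ x = star z := by
      rw [hzdef, ← Matrix.star_dotProduct]
    rw [h3, hz] at h2
    exact h2
  rw [Complex.le_def]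
  refine ⟨by simpa using hre, ?_⟩
  have := congrArg Complex.im hz
  simp only [Complex.star_def, Complex.conj_im] at this
  simp only [Complex.zero_im]
  linarith


lemma smul_one_posSemidef {c : ℝ} (hc : 0 ≤ c) :
    ((c : ℂ) • (1 : Matrix m m ℂ)).PosSemidef := by
  refine Matrix.PosSemidef.of_dotProduct_mulVec_nonneg ?_ ?_
  · simp [Matrix.IsHermitian, Matrix.conjTranspose_smul, Complex.conj_ofReal]
  · intro x
    simp only [Matrix.smul_mulVec, Matrix.one_mulVec, dotProduct_smul,
      smul_eq_mul]
    exact mul_nonneg (by exact_mod_cast hc) (dotProduct_star_self_nonneg x)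

lemma algebraMap_eq_coe_smul_one (c : ℝ) :
    algebraMap ℝ (EuclideanSpace ℂ m →L[ℂ] EuclideanSpace ℂ m) c = (c : ℂ) • 1 := by
  rw [Algebra.algebraMap_eq_smul_one, ← algebraMap_smul ℂ c
    (1 : EuclideanSpace ℂ m →L[ℂ] EuclideanSpace ℂ m), Complex.coe_algebraMap]

lemma opNorm_le_of_psd {M : Matrix m m ℂ} {c : ℝ} (hc : 0 ≤ c) (hM : M.PosSemidef)
    (h : ((c : ℂ) • 1 - M).PosSemidef) : opNorm M ≤ c := by
  have h0 := nonneg_clm_of_posSemidef hM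
  have h1 := nonneg_clm_of_posSemidef h
  rw [map_sub, map_smul, map_one, sub_nonneg] at h1
  refine (CStarAlgebra.norm_le_iff_le_algebraMap _ hc h0).mpr ?_
  rwa [algebraMap_eq_coe_smul_one]

lemma herm_le_opNorm_smul_one {M : Matrix m m ℂ} (hM : M.IsHermitian) :
    (((opNorm M : ℝ) : ℂ) • 1 - M).PosSemidef := by
  apply posSemidef_of_nonneg_clm
  rw [map_sub, map_smul, map_one, sub_nonneg, ← algebraMap_eq_coe_smul_one]
  have hsa : IsSelfAdjoint (Matrix.toEuclideanCLM (𝕜 := ℂ) M) := by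
    have hsM : star M = M := hM
    rw [IsSelfAdjoint, ← map_star, hsM]
  exact hsa.le_algebraMap_norm_self

lemma opNorm_mono {M N : Matrix m m ℂ} (hM : M.PosSemidef) (hMN : (N - M).PosSemidef) :
    opNorm M ≤ opNorm N := by
  have h1 := nonneg_clm_of_posSemidef hMN
  rw [map_sub, sub_nonneg] at h1
  exact CStarAlgebra.norm_le_norm_of_nonneg_of_le (nonneg_clm_of_posSemidef hM) h1

end Aux
theorem stmt_1 {n : ℕ} (A B X : Matrix (Fin n) (Fin n) ℂ)
    (hA : A.PosDef) (hB : B.PosDef)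
    (hBX : (B - Xᴴ * A⁻¹ * X).PosSemidef)
    (hH : opNorm (Matrix.fromBlocks A X Xᴴ B) > opNorm (A + B)) :
    opNorm (A + X * A⁻¹ * Xᴴ) > opNorm (A + Xᴴ * A⁻¹ * X) := by
  classical
  haveI := hA.isUnit.invertible
  have hAi : A⁻¹.PosDef := hA.inv
  have hXAX : (X * A⁻¹ * Xᴴ).PosSemidef := hAi.posSemidef.mul_mul_conjTranspose_same X
  have hXAX' : (Xᴴ * A⁻¹ * X).PosSemidef := by
    simpa using hAi.posSemidef.mul_mul_conjTranspose_same Xᴴ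
  have hK1 : (A + B).PosSemidef := (hA.add hB).posSemidef
  have hK2 : (A + X * A⁻¹ * Xᴴ).PosSemidef := (Matrix.PosDef.add_posSemidef hA hXAX).posSemidef
  have hK3 : (A + Xᴴ * A⁻¹ * X).PosSemidef := (Matrix.PosDef.add_posSemidef hA hXAX').posSemidef
  set s : ℝ := max (opNorm (A + B)) (opNorm (A + X * A⁻¹ * Xᴴ)) with hs
  have hsK : ∀ K : Matrix (Fin n) (Fin n) ℂ, K.PosSemidef → opNorm K ≤ s →
      (((s : ℂ)) • 1 - K).PosSemidef := by
    intro K hK hle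
    have h1 := herm_le_opNorm_smul_one hK.1
    have h2 := smul_one_posSemidef (m := Fin n) (sub_nonneg.mpr hle)
    have h3 := h2.add h1
    have he : ((s - opNorm K : ℝ) : ℂ) • (1 : Matrix (Fin n) (Fin n) ℂ) +
        (((opNorm K : ℝ) : ℂ) • 1 - K) = (s : ℂ) • 1 - K := by
      rw [Complex.ofReal_sub, sub_smul]; abel
    rwa [he] at h3
  have hs1 := hsK _ hK1 (le_max_left _ _)
  have hs2 := hsK _ hK2 (le_max_right _ _)
  have hDpos : ((s : ℂ) • 1 - A).PosDef := by
    have he : ((s : ℂ) • 1 - (A + B)) + B = (s : ℂ) • (1 : Matrix (Fin n) (Fin n) ℂ) - A := by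
      abel
    have := Matrix.PosDef.posSemidef_add hs1 hB
    rwa [he] at this
  haveI := hDpos.isUnit.invertible
  have hblock : (Matrix.fromBlocks ((s : ℂ) • 1 - A) X Xᴴ A).PosSemidef := by
    refine (Matrix.PosDef.fromBlocks₂₂ _ _ hA).mpr ?_
    have he : ((s : ℂ) • 1 - (A + X * A⁻¹ * Xᴴ)) = ((s : ℂ) • 1 - A) - X * A⁻¹ * Xᴴ := by abel
    rwa [he] at hs2
  have hkey : (A - Xᴴ * ((s : ℂ) • 1 - A)⁻¹ * X).PosSemidef :=
    (Matrix.PosDef.fromBlocks₁₁ _ _ hDpos).mp hblock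
  have hSchur : (((s : ℂ) • 1 - B) - Xᴴ * ((s : ℂ) • 1 - A)⁻¹ * X).PosSemidef := by
    have h3 := hs1.add hkey
    have he : ((s : ℂ) • 1 - (A + B)) + (A - Xᴴ * ((s : ℂ) • 1 - A)⁻¹ * X)
        = ((s : ℂ) • 1 - B) - Xᴴ * ((s : ℂ) • 1 - A)⁻¹ * X := by abel
    rwa [he] at h3
  have hbig : ((s : ℂ) • (1 : Matrix (Fin n ⊕ Fin n) (Fin n ⊕ Fin n) ℂ)
      - Matrix.fromBlocks A X Xᴴ B).PosSemidef := by
    have he : (s : ℂ) • (1 : Matrix (Fin n ⊕ Fin n) (Fin n ⊕ Fin n) ℂ)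
        - Matrix.fromBlocks A X Xᴴ B
        = Matrix.fromBlocks ((s : ℂ) • 1 - A) (-X) (-X)ᴴ ((s : ℂ) • 1 - B) := by
      rw [← Matrix.fromBlocks_one, Matrix.fromBlocks_smul, sub_eq_add_neg,
        Matrix.fromBlocks_neg, Matrix.fromBlocks_add]
      simp [sub_eq_add_neg, Matrix.conjTranspose_neg]
    rw [he]
    refine (Matrix.PosDef.fromBlocks₁₁ _ _ hDpos).mpr ?_
    have he2 : (-X)ᴴ * ((s : ℂ) • 1 - A)⁻¹ * (-X) = Xᴴ * ((s : ℂ) • 1 - A)⁻¹ * X := by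
      simp [Matrix.conjTranspose_neg, Matrix.neg_mul, Matrix.mul_neg]
    rw [he2]
    exact hSchur
  have hHfb : (Matrix.fromBlocks A X Xᴴ B).PosSemidef :=
    (Matrix.PosDef.fromBlocks₁₁ _ _ hA).mpr hBX
  have hs0 : (0 : ℝ) ≤ s := le_max_of_le_left (norm_nonneg _)
  have hmain : opNorm (Matrix.fromBlocks A X Xᴴ B) ≤ s := opNorm_le_of_psd hs0 hHfb hbig
  have h23 : opNorm (A + Xᴴ * A⁻¹ * X) ≤ opNorm (A + B) := by
    refine opNorm_mono hK3 ?_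
    have he : (A + B) - (A + Xᴴ * A⁻¹ * X) = B - Xᴴ * A⁻¹ * X := by abel
    rwa [he]
  have hlt : opNorm (A + B) < opNorm (A + X * A⁻¹ * Xᴴ) := by
    by_contra hcon
    push_neg at hcon
    rw [hs, max_eq_left hcon] at hmain
    exact absurd hH (not_lt.mpr hmain)
  exact lt_of_le_of_lt h23 hlt
end

section
/- Let A be a positive definite n×n complex matrix and X an n×n complex matrix. Set α = ||A + X* A⁻¹ X|| and β = ||A + X A⁻¹ X*||. If α > β, then for every Hermitian matrix B with B ≥ X* A⁻¹ X, the operator norm of the block matrix [[A, X], [X*, B]] is at most ||A + B||. -/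
open scoped Matrix ComplexOrder

open scoped InnerProductSpace

namespace Aux

variable {m : Type*} [Fintype m] [DecidableEq m]

open Matrix

lemma inner_eq (M : Matrix m m ℂ) (x y : EuclideanSpace ℂ m) :
    ⟪x, Matrix.toEuclideanCLM (𝕜 := ℂ) M y⟫_ℂ
      = star (WithLp.equiv 2 (m → ℂ) x) ⬝ᵥ (M *ᵥ (WithLp.equiv 2 (m → ℂ) y)) := by
  simp only [PiLp.inner_apply, RCLike.inner_apply, dotProduct, Pi.star_apply]
  apply Finset.sum_congr rfl
  intro i _
  rw [mul_comm]
  rfl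

lemma isSelfAdjoint_clm {M : Matrix m m ℂ} (hM : M.IsHermitian) :
    IsSelfAdjoint (Matrix.toEuclideanCLM (𝕜 := ℂ) M) := by
  have h : star M = M := hM
  rw [_root_.IsSelfAdjoint, ← map_star, h]

/-- quadratic-form upper bound gives norm bound for Hermitian matrices -/
lemma opNorm_le_of_forall {M : Matrix m m ℂ} (hM : M.IsHermitian) {c : ℝ} (hc : 0 ≤ c)
    (h : ∀ x : EuclideanSpace ℂ m,
      |(⟪x, Matrix.toEuclideanCLM (𝕜 := ℂ) M x⟫_ℂ).re| ≤ c * ‖x‖ ^ 2) :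
    opNorm M ≤ c := by
  set T := Matrix.toEuclideanCLM (𝕜 := ℂ) M with hT
  have hsym : (T : EuclideanSpace ℂ m →ₗ[ℂ] EuclideanSpace ℂ m).IsSymmetric :=
    (ContinuousLinearMap.isSelfAdjoint_iff_isSymmetric).mp (isSelfAdjoint_clm hM)
  have hn : Module.finrank ℂ (EuclideanSpace ℂ m) = Fintype.card m := finrank_euclideanSpace
  set b := hsym.eigenvectorBasis hn with hb
  set μ := hsym.eigenvalues hn with hμ
  have hμle : ∀ i, |μ i| ≤ c := by
    intro i
    have hev := hsym.apply_eigenvectorBasis hn i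
    have h1 : ‖b i‖ = 1 := (b.orthonormal).1 i
    have h2 := h (b i)
    rw [show Matrix.toEuclideanCLM (𝕜 := ℂ) M (b i)
        = (T : EuclideanSpace ℂ m →ₗ[ℂ] EuclideanSpace ℂ m) (b i) from rfl, hev] at h2
    rw [inner_smul_right, inner_self_eq_norm_sq_to_K, h1] at h2
    simpa using h2
  refine ContinuousLinearMap.opNorm_le_bound _ hc ?_
  intro v
  have hrepr : ∀ w : EuclideanSpace ℂ m, ‖w‖ ^ 2 = ∑ i, ‖b.repr w i‖ ^ 2 := by
    intro w
    rw [← b.repr.norm_map w, EuclideanSpace.norm_eq]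
    rw [Real.sq_sqrt (by positivity)]
  have hTv : ‖T v‖ ^ 2 ≤ (c * ‖v‖) ^ 2 := by
    rw [hrepr (T v)]
    have : ∀ i, ‖b.repr (T v) i‖ ^ 2 ≤ c ^ 2 * ‖b.repr v i‖ ^ 2 := by
      intro i
      have := hsym.eigenvectorBasis_apply_self_apply hn v i
      rw [show b.repr (T v) i
          = (hsym.eigenvectorBasis hn).repr
              ((T : EuclideanSpace ℂ m →ₗ[ℂ] EuclideanSpace ℂ m) v) i from rfl, this]
      rw [norm_mul, mul_pow, RCLike.norm_ofReal]
      exact mul_le_mul_of_nonneg_right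
        (by nlinarith [hμle i, abs_nonneg (μ i)]) (by positivity)
    calc ∑ i, ‖b.repr (T v) i‖ ^ 2 ≤ ∑ i, c ^ 2 * ‖b.repr v i‖ ^ 2 :=
          Finset.sum_le_sum fun i _ => this i
      _ = c ^ 2 * ∑ i, ‖b.repr v i‖ ^ 2 := by rw [Finset.mul_sum]
      _ = (c * ‖v‖) ^ 2 := by rw [← hrepr v]; ring
  have := Real.sqrt_le_sqrt hTv
  rwa [Real.sqrt_sq (norm_nonneg _), Real.sqrt_sq (by positivity)] at this

/-- an eigenvalue of a matrix is at most the operator norm -/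
lemma le_opNorm_of_eig (M : Matrix m m ℂ) (r : ℝ) {v : m → ℂ} (hv : v ≠ 0)
    (h : M *ᵥ v = (r : ℂ) • v) : r ≤ opNorm M := by
  set x : EuclideanSpace ℂ m := (WithLp.equiv 2 (m → ℂ)).symm v with hx
  have hx0 : x ≠ 0 := by
    simpa [hx] using hv
  have hTx : Matrix.toEuclideanCLM (𝕜 := ℂ) M x = (r : ℂ) • x := by
    rw [hx]; change WithLp.toLp 2 (M *ᵥ v) = _; rw [h]
    rfl
  have h1 : ‖Matrix.toEuclideanCLM (𝕜 := ℂ) M x‖ = |r| * ‖x‖ := by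
    rw [hTx, norm_smul, Complex.norm_real, Real.norm_eq_abs]
  have h2 := (Matrix.toEuclideanCLM (𝕜 := ℂ) M).le_opNorm x
  rw [h1] at h2
  have hxpos : 0 < ‖x‖ := _root_.norm_pos_iff.mpr hx0
  have h3 : |r| * ‖x‖ ≤ opNorm M * ‖x‖ := h2
  have : |r| ≤ opNorm M := le_of_mul_le_mul_right h3 hxpos
  exact (le_abs_self r).trans this

/-- monotonicity of opNorm on PSD matrices -/
lemma opNorm_mono {P Q : Matrix m m ℂ} (hP : P.PosSemidef) (hQP : (Q - P).PosSemidef) :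
    opNorm P ≤ opNorm Q := by
  have hc : (0 : ℝ) ≤ opNorm Q := norm_nonneg _
  refine opNorm_le_of_forall hP.1 hc ?_
  intro x
  set x' := WithLp.equiv 2 (m → ℂ) x with hx'
  have h1 : 0 ≤ (⟪x, Matrix.toEuclideanCLM (𝕜 := ℂ) P x⟫_ℂ).re := by
    rw [inner_eq]
    exact hP.re_dotProduct_nonneg x'
  have h2 : (⟪x, Matrix.toEuclideanCLM (𝕜 := ℂ) P x⟫_ℂ).re
      ≤ (⟪x, Matrix.toEuclideanCLM (𝕜 := ℂ) Q x⟫_ℂ).re := by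
    have h3 := hQP.re_dotProduct_nonneg x'
    rw [Matrix.sub_mulVec, dotProduct_sub] at h3
    have h3' : 0 ≤ (star x' ⬝ᵥ (Q *ᵥ x')).re - (star x' ⬝ᵥ (P *ᵥ x')).re := by
      simpa [RCLike.re_to_complex, Complex.sub_re] using h3
    rw [inner_eq, inner_eq]
    linarith
  have h5 : (⟪x, Matrix.toEuclideanCLM (𝕜 := ℂ) Q x⟫_ℂ).re ≤ opNorm Q * ‖x‖ ^ 2 := by
    calc (⟪x, Matrix.toEuclideanCLM (𝕜 := ℂ) Q x⟫_ℂ).re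
        ≤ ‖⟪x, Matrix.toEuclideanCLM (𝕜 := ℂ) Q x⟫_ℂ‖ := Complex.re_le_norm _
      _ ≤ ‖x‖ * ‖Matrix.toEuclideanCLM (𝕜 := ℂ) Q x‖ := norm_inner_le_norm _ _
      _ ≤ ‖x‖ * (opNorm Q * ‖x‖) := by
          gcongr
          exact (Matrix.toEuclideanCLM (𝕜 := ℂ) Q).le_opNorm x
      _ = opNorm Q * ‖x‖ ^ 2 := by ring
  rw [abs_of_nonneg h1]
  linarith

lemma conj_inner_self {M : Matrix m m ℂ} (hM : M.IsHermitian) (x : EuclideanSpace ℂ m) :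
    ((⟪x, Matrix.toEuclideanCLM (𝕜 := ℂ) M x⟫_ℂ).im) = 0 := by
  have hsym : ((Matrix.toEuclideanCLM (𝕜 := ℂ) M : EuclideanSpace ℂ m →ₗ[ℂ] EuclideanSpace ℂ m)).IsSymmetric :=
    (ContinuousLinearMap.isSelfAdjoint_iff_isSymmetric).mp (isSelfAdjoint_clm hM)
  have h1 : (starRingEnd ℂ) ⟪x, Matrix.toEuclideanCLM (𝕜 := ℂ) M x⟫_ℂ
      = ⟪x, Matrix.toEuclideanCLM (𝕜 := ℂ) M x⟫_ℂ := by
    rw [inner_conj_symm]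
    exact hsym x x
  have := Complex.conj_eq_iff_im.mp h1
  exact this

lemma dot_self_eq_norm_sq (x : EuclideanSpace ℂ m) :
    star (WithLp.equiv 2 (m → ℂ) x) ⬝ᵥ (WithLp.equiv 2 (m → ℂ) x) = ((‖x‖ : ℂ)) ^ 2 := by
  have h := inner_eq (1 : Matrix m m ℂ) x x
  rw [_root_.map_one, Matrix.one_mulVec] at h
  rw [← h]
  simp [ContinuousLinearMap.one_apply, inner_self_eq_norm_sq_to_K]

/-- if `opNorm H ≤ c` then `c • 1 - H` is PSD -/
lemma smul_one_sub_psd {H : Matrix m m ℂ} (hH : H.IsHermitian) {c : ℝ}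
    (h : opNorm H ≤ c) : (((c : ℂ) • 1 - H)).PosSemidef := by
  refine Matrix.PosSemidef.of_dotProduct_mulVec_nonneg ?_ ?_
  · have h1 : ((c : ℂ) • (1 : Matrix m m ℂ)).IsHermitian := by
      simp [Matrix.IsHermitian, Matrix.conjTranspose_smul, Complex.star_def,
        Complex.conj_ofReal]
    exact h1.sub hH
  · intro x'
    set x : EuclideanSpace ℂ m := (WithLp.equiv 2 (m → ℂ)).symm x' with hxdef
    have hx' : WithLp.equiv 2 (m → ℂ) x = x' := by
      rw [hxdef]; exact Equiv.apply_symm_apply _ _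
    set z := ⟪x, Matrix.toEuclideanCLM (𝕜 := ℂ) H x⟫_ℂ with hz
    have hzdot : star x' ⬝ᵥ (H *ᵥ x') = z := by
      rw [hz, inner_eq, hx']
    have him : z.im = 0 := conj_inner_self hH x
    have hdot : star x' ⬝ᵥ (x') = ((‖x‖ : ℂ)) ^ 2 := by
      rw [← hx']; exact dot_self_eq_norm_sq x
    have key : star x' ⬝ᵥ (((c : ℂ) • 1 - H) *ᵥ x')
        = ((c * ‖x‖ ^ 2 - z.re : ℝ) : ℂ) := by
      rw [Matrix.sub_mulVec, dotProduct_sub, Matrix.smul_mulVec, Matrix.one_mulVec,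
        dotProduct_smul, hzdot, hdot]
      apply Complex.ext
      · simp
      · simp [him]
    rw [key]
    have hzre : z.re ≤ c * ‖x‖ ^ 2 := by
      calc z.re ≤ ‖z‖ := Complex.re_le_norm _
        _ ≤ ‖x‖ * ‖Matrix.toEuclideanCLM (𝕜 := ℂ) H x‖ := norm_inner_le_norm _ _
        _ ≤ ‖x‖ * (opNorm H * ‖x‖) := by
            gcongr
            exact (Matrix.toEuclideanCLM (𝕜 := ℂ) H).le_opNorm x
        _ ≤ ‖x‖ * (c * ‖x‖) := by
            have h0 : (0:ℝ) ≤ ‖x‖ := norm_nonneg _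
            nlinarith
        _ = c * ‖x‖ ^ 2 := by ring
    rw [show ((0:ℂ) = ((0:ℝ):ℂ)) from rfl, Complex.real_le_real]
    linarith

/-- a PSD matrix has a top eigenvector with eigenvalue `opNorm` -/
lemma exists_top_eigenvector [Nonempty m] {M : Matrix m m ℂ} (hM : M.PosSemidef) :
    ∃ v : m → ℂ, v ≠ 0 ∧ M *ᵥ v = ((opNorm M : ℝ) : ℂ) • v := by
  set T := Matrix.toEuclideanCLM (𝕜 := ℂ) M with hT
  have hsym : (T : EuclideanSpace ℂ m →ₗ[ℂ] EuclideanSpace ℂ m).IsSymmetric :=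
    (ContinuousLinearMap.isSelfAdjoint_iff_isSymmetric).mp (isSelfAdjoint_clm hM.1)
  have hn : Module.finrank ℂ (EuclideanSpace ℂ m) = Fintype.card m := finrank_euclideanSpace
  set b := hsym.eigenvectorBasis hn with hb
  set μ := hsym.eigenvalues hn with hμ
  haveI : Nonempty (Fin (Fintype.card m)) := by
    rw [← Fin.pos_iff_nonempty]
    exact Fintype.card_pos
  obtain ⟨i0, hi0⟩ := Finite.exists_max (fun i => |μ i|)
  -- |μ i0| ≤ opNorm M
  have hle : |μ i0| ≤ opNorm M := by
    have hev : T (b i0) = (μ i0 : ℂ) • b i0 := hsym.apply_eigenvectorBasis hn i0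
    have h1 : ‖b i0‖ = 1 := (b.orthonormal).1 i0
    have h2 : ‖T (b i0)‖ ≤ opNorm M * ‖b i0‖ := T.le_opNorm _
    rw [hev, norm_smul, h1, mul_one, mul_one] at h2
    simp only [Complex.norm_real, RCLike.norm_ofReal, Real.norm_eq_abs] at h2
    exact h2
  -- opNorm M ≤ |μ i0|
  have hge : opNorm M ≤ |μ i0| := by
    refine opNorm_le_of_forall hM.1 (abs_nonneg _) ?_
    intro x
    have hinner : ⟪x, T x⟫_ℂ = ∑ i, ((μ i : ℂ)) * (starRingEnd ℂ (b.repr x i) * b.repr x i) := by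
      rw [← b.repr.inner_map_map x (T x)]
      rw [PiLp.inner_apply]
      apply Finset.sum_congr rfl
      intro i _
      rw [RCLike.inner_apply]
      have : b.repr (T x) i = (μ i : ℂ) * b.repr x i := hsym.eigenvectorBasis_apply_self_apply hn x i
      rw [this]
      ring
    have hre : (⟪x, T x⟫_ℂ).re = ∑ i, μ i * ‖b.repr x i‖ ^ 2 := by
      rw [hinner]
      rw [Complex.re_sum]
      apply Finset.sum_congr rfl
      intro i _
      have : starRingEnd ℂ (b.repr x i) * b.repr x i = ((‖b.repr x i‖ ^ 2 : ℝ) : ℂ) := by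
        rw [RCLike.conj_mul]
        norm_cast
      rw [this]
      have : ((μ i : ℂ)) * ((‖b.repr x i‖ ^ 2 : ℝ) : ℂ) = ((μ i * ‖b.repr x i‖ ^ 2 : ℝ) : ℂ) := by
        push_cast; ring
      rw [this, Complex.ofReal_re]
    rw [hre]
    calc |∑ i, μ i * ‖b.repr x i‖ ^ 2| ≤ ∑ i, |μ i * ‖b.repr x i‖ ^ 2| :=
          Finset.abs_sum_le_sum_abs _ _
      _ ≤ ∑ i, |μ i0| * ‖b.repr x i‖ ^ 2 := by
          apply Finset.sum_le_sum
          intro i _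
          rw [abs_mul, abs_of_nonneg (by positivity : (0:ℝ) ≤ ‖b.repr x i‖ ^ 2)]
          exact mul_le_mul_of_nonneg_right (hi0 i) (by positivity)
      _ = |μ i0| * ∑ i, ‖b.repr x i‖ ^ 2 := by rw [Finset.mul_sum]
      _ = |μ i0| * ‖x‖ ^ 2 := by
          congr 1
          rw [← b.repr.norm_map x, EuclideanSpace.norm_eq, Real.sq_sqrt (by positivity)]
  -- μ i0 ≥ 0
  have hpos : 0 ≤ μ i0 := by
    have hev : T (b i0) = (μ i0 : ℂ) • b i0 := hsym.apply_eigenvectorBasis hn i0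
    have h1 : ‖b i0‖ = 1 := (b.orthonormal).1 i0
    have h2 := hM.re_dotProduct_nonneg (WithLp.equiv 2 (m → ℂ) (b i0))
    have h3 : star (WithLp.equiv 2 (m → ℂ) (b i0)) ⬝ᵥ (M *ᵥ (WithLp.equiv 2 (m → ℂ) (b i0)))
        = ⟪b i0, T (b i0)⟫_ℂ := (inner_eq M (b i0) (b i0)).symm
    rw [h3, hev, inner_smul_right, inner_self_eq_norm_sq_to_K, h1] at h2
    simpa using h2
  have heq : μ i0 = opNorm M := le_antisymm ((le_abs_self _).trans hle)
    (by rwa [abs_of_nonneg hpos] at hge)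
  -- convert eigenvector equation to matrix form
  refine ⟨WithLp.equiv 2 (m → ℂ) (b i0), ?_, ?_⟩
  · intro hcontra
    have : b i0 ≠ 0 := by
      intro h0
      have := (b.orthonormal).1 i0
      rw [h0] at this
      simp at this
    exact this (by
      have : (WithLp.equiv 2 (m → ℂ)).symm (WithLp.equiv 2 (m → ℂ) (b i0)) = b i0 :=
        Equiv.symm_apply_apply _ _
      rw [← this, hcontra]
      simp)
  · have hev : T (b i0) = (μ i0 : ℂ) • b i0 := hsym.apply_eigenvectorBasis hn i0
    have h4 := Matrix.ofLp_toEuclideanCLM (𝕜 := ℂ) M (b i0)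
    rw [hev] at h4
    rw [heq] at h4
    exact h4.symm

/-- antitonicity of inverse: if `0 < A ≤ C` then `C⁻¹ ≤ A⁻¹` -/
lemma inv_sub_inv_psd {A C : Matrix m m ℂ} (hA : A.PosDef) (hC : C.PosDef)
    (h : (C - A).PosSemidef) : (A⁻¹ - C⁻¹).PosSemidef := by
  have hAd : IsUnit A.det := (Matrix.isUnit_iff_isUnit_det _).mp hA.isUnit
  have hCd : IsUnit C.det := (Matrix.isUnit_iff_isUnit_det _).mp hC.isUnit
  have e1 : A⁻¹ * A = 1 := Matrix.nonsing_inv_mul A hAd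
  have e2 : A * A⁻¹ = 1 := Matrix.mul_nonsing_inv A hAd
  have e3 : C⁻¹ * C = 1 := Matrix.nonsing_inv_mul C hCd
  have e4 : C * C⁻¹ = 1 := Matrix.mul_nonsing_inv C hCd
  have hCiH : (C⁻¹)ᴴ = C⁻¹ := (hC.1.inv).eq
  have key : A⁻¹ - C⁻¹ = (A⁻¹ - C⁻¹)ᴴ * A * (A⁻¹ - C⁻¹) + (C⁻¹)ᴴ * (C - A) * C⁻¹ := by
    rw [Matrix.conjTranspose_sub, (hA.1.inv).eq, hCiH]
    simp only [Matrix.sub_mul, Matrix.mul_sub, Matrix.mul_assoc, e1, e2, e3, e4,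
      Matrix.mul_one, Matrix.one_mul]
    abel
  rw [key]
  exact (hA.posSemidef.conjTranspose_mul_mul_same _).add (h.conjTranspose_mul_mul_same _)

end Aux

theorem stmt_2 {n : ℕ} (A X : Matrix (Fin n) (Fin n) ℂ) (hA : A.PosDef)
    (hαβ : opNorm (A + Xᴴ * A⁻¹ * X) > opNorm (A + X * A⁻¹ * Xᴴ)) :
    ∀ B : Matrix (Fin n) (Fin n) ℂ, B.IsHermitian → (B - Xᴴ * A⁻¹ * X).PosSemidef →
      opNorm (Matrix.fromBlocks A X Xᴴ B) ≤ opNorm (A + B) := by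
  intro B hB hBX
  rcases Nat.eq_zero_or_pos n with hn0 | hn0
  · exfalso
    subst hn0
    have h : Xᴴ * A⁻¹ * X = X * A⁻¹ * Xᴴ := by
      funext i j; exact i.elim0
    rw [h] at hαβ
    exact lt_irrefl _ hαβ
  haveI : Nonempty (Fin n) := Fin.pos_iff_nonempty.mp hn0
  haveI : Invertible A := A.invertibleOfIsUnitDet ((Matrix.isUnit_iff_isUnit_det A).mp hA.isUnit)
  by_contra hcon
  push_neg at hcon
  set lam := opNorm (Matrix.fromBlocks A X Xᴴ B) with hlam
  set μ := opNorm (A + B) with hmu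
  have hXAX : (Xᴴ * A⁻¹ * X).PosSemidef := hA.inv.posSemidef.conjTranspose_mul_mul_same X
  have hT : (Matrix.fromBlocks A X Xᴴ B).PosSemidef :=
    (Matrix.PosDef.fromBlocks₁₁ X B hA).mpr hBX
  have hBpsd : B.PosSemidef := by
    have := hBX.add hXAX
    simpa using this
  have hABpsd : (A + B).PosSemidef := hA.posSemidef.add hBpsd
  have hαμ : opNorm (A + Xᴴ * A⁻¹ * X) ≤ μ := by
    apply Aux.opNorm_mono (hA.posSemidef.add hXAX)
    have h : (A + B) - (A + Xᴴ * A⁻¹ * X) = B - Xᴴ * A⁻¹ * X := by abel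
    rw [h]; exact hBX
  obtain ⟨w, hw0, hw⟩ := Aux.exists_top_eigenvector hT
  set u : Fin n → ℂ := fun i => w (Sum.inl i) with hu
  set v : Fin n → ℂ := fun i => w (Sum.inr i) with hv
  have hwelim : w = Sum.elim u v := by funext i; cases i <;> rfl
  rw [hwelim, Matrix.fromBlocks_mulVec] at hw
  have h1 : A *ᵥ u + X *ᵥ v = ((lam : ℝ) : ℂ) • u := by
    funext i
    have := congrFun hw (Sum.inl i)
    simpa using this
  have h2 : Xᴴ *ᵥ u + B *ᵥ v = ((lam : ℝ) : ℂ) • v := by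
    funext i
    have := congrFun hw (Sum.inr i)
    simpa using this
  have hu0 : u ≠ 0 := by
    intro h0
    have hv0 : v ≠ 0 := by
      intro h0'
      apply hw0
      rw [hwelim, h0, h0']
      funext i; cases i <;> rfl
    rw [h0, Matrix.mulVec_zero, zero_add] at h2
    have hlB : lam ≤ opNorm B := Aux.le_opNorm_of_eig B lam hv0 h2
    have hBμ : opNorm B ≤ μ := by
      apply Aux.opNorm_mono hBpsd
      have h : (A + B) - B = A := by abel
      rw [h]; exact hA.posSemidef
    linarith
  have hC1 : (((lam : ℝ) : ℂ) • 1 - (A + B)).PosSemidef :=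
    Aux.smul_one_sub_psd hABpsd.1 (le_of_lt hcon)
  set C : Matrix (Fin n) (Fin n) ℂ := ((lam : ℝ) : ℂ) • 1 - B with hCdef
  have hC : C.PosDef := by
    have h := hA.add_posSemidef hC1
    have heq : A + (((lam : ℝ) : ℂ) • 1 - (A + B)) = C := by rw [hCdef]; abel
    rwa [heq] at h
  have hCdet : IsUnit C.det := (Matrix.isUnit_iff_isUnit_det C).mp hC.isUnit
  have hCv : C *ᵥ v = Xᴴ *ᵥ u := by
    rw [hCdef, Matrix.sub_mulVec, Matrix.smul_mulVec, Matrix.one_mulVec, ← h2]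
    abel
  have hveq : v = C⁻¹ *ᵥ (Xᴴ *ᵥ u) := by
    rw [← hCv, Matrix.mulVec_mulVec, Matrix.nonsing_inv_mul C hCdet, Matrix.one_mulVec]
  have key : (A + X * C⁻¹ * Xᴴ) *ᵥ u = ((lam : ℝ) : ℂ) • u := by
    rw [Matrix.add_mulVec]
    have h : (X * C⁻¹ * Xᴴ) *ᵥ u = X *ᵥ v := by
      rw [hveq, Matrix.mulVec_mulVec, Matrix.mulVec_mulVec]
    rw [h]
    exact h1
  have hD : (A + X * C⁻¹ * Xᴴ).PosSemidef :=
    hA.posSemidef.add (hC.inv.posSemidef.mul_mul_conjTranspose_same X)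
  have hlamD : lam ≤ opNorm (A + X * C⁻¹ * Xᴴ) := Aux.le_opNorm_of_eig _ lam hu0 key
  have hsub : (A⁻¹ - C⁻¹).PosSemidef := by
    apply Aux.inv_sub_inv_psd hA hC
    have h : C - A = ((lam : ℝ) : ℂ) • 1 - (A + B) := by rw [hCdef]; abel
    rw [h]; exact hC1
  have hDβ : opNorm (A + X * C⁻¹ * Xᴴ) ≤ opNorm (A + X * A⁻¹ * Xᴴ) := by
    apply Aux.opNorm_mono hD
    have h : (A + X * A⁻¹ * Xᴴ) - (A + X * C⁻¹ * Xᴴ) = X * (A⁻¹ - C⁻¹) * Xᴴ := by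
      rw [Matrix.mul_sub, Matrix.sub_mul]; abel
    rw [h]
    exact hsub.mul_mul_conjTranspose_same X
  linarith
end

section
/- Let A be a positive definite n×n complex matrix and X an n×n complex matrix. If ||A + X* A⁻¹ X|| = ||A + X A⁻¹ X*||, then for every Hermitian B with B ≥ X* A⁻¹ X one has ||[[A, X], [X*, B]]|| ≤ ||A + B||, and for every Hermitian C with C ≥ X A⁻¹ X* one has ||[[A, X*], [X, C]]|| ≤ ||A + C||. -/
open scoped Matrix ComplexOrder

namespace Stmt4Aux

open Matrix ContinuousLinearMap

variable {m : Type*} [Fintype m] [DecidableEq m]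

open scoped MatrixOrder in
lemma exists_eq_conjTranspose_mul_self {M : Matrix m m ℂ} (hM : M.PosSemidef) :
    ∃ B : Matrix m m ℂ, M = Bᴴ * B := by
  have h0 : 0 ≤ M := hM.nonneg
  refine ⟨CFC.sqrt M, ?_⟩
  have hs : (CFC.sqrt M)ᴴ = CFC.sqrt M := (CFC.sqrt_nonneg M).isSelfAdjoint
  rw [hs, CFC.sqrt_mul_sqrt_self M h0]

lemma nonneg_of_posSemidef {M : Matrix m m ℂ} (hM : M.PosSemidef) :
    0 ≤ Matrix.toEuclideanCLM (𝕜 := ℂ) M := by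
  obtain ⟨B, rfl⟩ := exists_eq_conjTranspose_mul_self hM
  rw [_root_.map_mul, ← Matrix.star_eq_conjTranspose, map_star]
  exact star_mul_self_nonneg _

lemma posSemidef_of_nonneg {M : Matrix m m ℂ} (hM : 0 ≤ Matrix.toEuclideanCLM (𝕜 := ℂ) M) :
    M.PosSemidef := by
  rw [ContinuousLinearMap.nonneg_iff_isPositive] at hM
  obtain ⟨hsa, hq⟩ := hM
  have hherm : M.IsHermitian := by
    have h1 : star (Matrix.toEuclideanCLM (𝕜 := ℂ) M) = Matrix.toEuclideanCLM (𝕜 := ℂ) M := ContinuousLinearMap.isSelfAdjoint_iff_isSymmetric.mpr hsa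
    rw [← map_star] at h1
    have h2 := (Matrix.toEuclideanCLM (𝕜 := ℂ) (n := m)).injective h1
    rwa [Matrix.star_eq_conjTranspose] at h2
  refine Matrix.PosSemidef.of_dotProduct_mulVec_nonneg hherm fun x => ?_
  have h1 := hq (WithLp.toLp 2 x)
  rw [ContinuousLinearMap.reApplyInnerSelf, Matrix.toEuclideanCLM_toLp,
    EuclideanSpace.inner_toLp_toLp] at h1
  -- h1 : 0 ≤ RCLike.re (star (M *ᵥ x) ⬝ᵥ x)
  have hstar : star (dotProduct (star x) (M *ᵥ x)) = dotProduct (star x) (M *ᵥ x) := by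
    rw [← Matrix.star_dotProduct, Matrix.star_mulVec, ← Matrix.dotProduct_mulVec, hherm.eq]
  have hz : x ⬝ᵥ star (M *ᵥ x) = star (dotProduct (star x) (M *ᵥ x)) := by
    rw [dotProduct_comm]; exact Matrix.star_dotProduct _ _
  rw [RCLike.nonneg_iff (K := ℂ)]
  constructor
  · rw [hz, hstar] at h1
    exact h1
  · exact Complex.conj_eq_iff_im.mp hstar

lemma le_clm_of_sub_posSemidef {P Q : Matrix m m ℂ} (h : (Q - P).PosSemidef) :
    Matrix.toEuclideanCLM (𝕜 := ℂ) P ≤ Matrix.toEuclideanCLM (𝕜 := ℂ) Q := by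
  rw [ContinuousLinearMap.le_def, ← map_sub]
  exact (ContinuousLinearMap.nonneg_iff_isPositive _).mp (nonneg_of_posSemidef h)

lemma opNorm_mono {P Q : Matrix m m ℂ} (hP : P.PosSemidef) (h : (Q - P).PosSemidef) :
    opNorm P ≤ opNorm Q :=
  CStarAlgebra.norm_le_norm_of_nonneg_of_le (nonneg_of_posSemidef hP) (le_clm_of_sub_posSemidef h)

lemma isPositive_real_smul_one {E : Type*} [NormedAddCommGroup E] [InnerProductSpace ℂ E]
    [CompleteSpace E] {t : ℝ} (ht : 0 ≤ t) :
    (((t : ℂ)) • (1 : E →L[ℂ] E)).IsPositive := by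
  constructor
  · have : star ((t : ℂ) • (1 : E →L[ℂ] E)) = (t : ℂ) • (1 : E →L[ℂ] E) := by
      rw [star_smul, star_one]
      simp [Complex.star_def, Complex.conj_ofReal]
    exact ContinuousLinearMap.isSelfAdjoint_iff_isSymmetric.mp this
  · intro x
    rw [ContinuousLinearMap.reApplyInnerSelf]
    simp only [ContinuousLinearMap.smul_apply, ContinuousLinearMap.one_apply]
    rw [inner_smul_left]
    simp only [Complex.conj_ofReal]
    have he : RCLike.re ((t : ℂ) * (inner ℂ x x : ℂ)) = t * RCLike.re (inner ℂ x x : ℂ) := by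
      simp [Complex.mul_re, Complex.ofReal_re, Complex.ofReal_im]
    rw [he]
    exact mul_nonneg ht inner_self_nonneg

lemma algebraMap_real_clm {E : Type*} [NormedAddCommGroup E] [InnerProductSpace ℂ E]
    [CompleteSpace E] (t : ℝ) :
    algebraMap ℝ (E →L[ℂ] E) t = (t : ℂ) • 1 := by
  rw [Algebra.algebraMap_eq_smul_one, ← algebraMap_smul ℂ t (1 : E →L[ℂ] E)]
  rfl

lemma smul_one_sub_posSemidef {P : Matrix m m ℂ} (hP : P.PosSemidef) {K : ℝ}
    (hK : opNorm P ≤ K) :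
    (((K : ℂ) • 1 : Matrix m m ℂ) - P).PosSemidef := by
  apply posSemidef_of_nonneg
  rw [_root_.map_sub, _root_.map_smul, _root_.map_one]
  set fP := Matrix.toEuclideanCLM (𝕜 := ℂ) P with hfP
  have h0 : 0 ≤ fP := nonneg_of_posSemidef hP
  have hsa : IsSelfAdjoint fP := ((ContinuousLinearMap.nonneg_iff_isPositive _).mp h0).isSelfAdjoint
  have h1 : (algebraMap ℝ (EuclideanSpace ℂ m →L[ℂ] EuclideanSpace ℂ m) ‖fP‖ - fP).IsPositive :=
    (ContinuousLinearMap.le_def _ _).mp hsa.le_algebraMap_norm_self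
  have hK' : ‖fP‖ ≤ K := hK
  have h2 : ((((K - ‖fP‖ : ℝ)) : ℂ) • (1 : EuclideanSpace ℂ m →L[ℂ] EuclideanSpace ℂ m)).IsPositive :=
    isPositive_real_smul_one (by linarith)
  have e : (K : ℂ) • (1 : EuclideanSpace ℂ m →L[ℂ] EuclideanSpace ℂ m) - fP =
      (((K - ‖fP‖ : ℝ)) : ℂ) • 1 +
        (algebraMap ℝ (EuclideanSpace ℂ m →L[ℂ] EuclideanSpace ℂ m) ‖fP‖ - fP) := by
    rw [algebraMap_real_clm, Complex.ofReal_sub]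
    module
  rw [e, ContinuousLinearMap.nonneg_iff_isPositive]
  exact h2.add h1

lemma posSemidef_fromBlocks_diag {P Q : Matrix m m ℂ} (hP : P.PosSemidef) (hQ : Q.PosSemidef) :
    (Matrix.fromBlocks P 0 0 Q).PosSemidef := by
  obtain ⟨E, rfl⟩ := exists_eq_conjTranspose_mul_self hP
  obtain ⟨F, rfl⟩ := exists_eq_conjTranspose_mul_self hQ
  have h : Matrix.fromBlocks (Eᴴ * E) 0 0 (Fᴴ * F) =
      (Matrix.fromBlocks E 0 0 F)ᴴ * (Matrix.fromBlocks E 0 0 F) := by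
    rw [Matrix.fromBlocks_conjTranspose, Matrix.fromBlocks_multiply]
    simp
  rw [h]
  exact Matrix.posSemidef_conjTranspose_mul_self _

open scoped MatrixOrder in
set_option maxHeartbeats 1000000 in
lemma main (A X B : Matrix m m ℂ) (hA : A.PosDef)
    (h1 : opNorm (A + X * A⁻¹ * Xᴴ) ≤ opNorm (A + B))
    (hB : (B - Xᴴ * A⁻¹ * X).PosSemidef) :
    opNorm (Matrix.fromBlocks A X Xᴴ B) ≤ opNorm (A + B) := by
  letI := hA.isUnit.invertible
  set K := opNorm (A + B) with hKdef
  have hAinv : (A⁻¹).PosSemidef := hA.inv.posSemidef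
  have hXAX : (Xᴴ * A⁻¹ * X).PosSemidef := hAinv.conjTranspose_mul_mul_same X
  have hXAX' : (X * A⁻¹ * Xᴴ).PosSemidef := hAinv.mul_mul_conjTranspose_same X
  have hBpsd : B.PosSemidef := by
    have := hB.add hXAX
    simpa using this
  have hABpsd : (A + B).PosSemidef := hA.posSemidef.add hBpsd
  have hM : (Matrix.fromBlocks A X Xᴴ B).PosSemidef :=
    (Matrix.PosDef.fromBlocks₁₁ X B hA).mpr hB
  -- the correction matrix
  set T := CFC.sqrt A with hT
  have hTH : Tᴴ = T := (CFC.sqrt_nonneg A).isSelfAdjoint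
  have hTT : T * T = A := CFC.sqrt_mul_sqrt_self A hA.posSemidef.nonneg
  have hTdet : IsUnit T.det := by
    have hAdet : IsUnit A.det := (Matrix.isUnit_iff_isUnit_det A).mp hA.isUnit
    rw [← hTT, Matrix.det_mul] at hAdet
    exact isUnit_of_mul_isUnit_left hAdet
  have hST : T⁻¹ * T = 1 := Matrix.nonsing_inv_mul T hTdet
  have hTS : T * T⁻¹ = 1 := Matrix.mul_nonsing_inv T hTdet
  have hSH : (T⁻¹)ᴴ = T⁻¹ := by rw [Matrix.conjTranspose_nonsing_inv, hTH]
  have hSS : T⁻¹ * T⁻¹ = A⁻¹ := by rw [← hTT, Matrix.mul_inv_rev]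
  set W := Matrix.fromBlocks (T⁻¹ * Xᴴ) (-T) (0 : Matrix m m ℂ) 0 with hW
  have haux1 : T⁻¹ * (T⁻¹ * Xᴴ) = A⁻¹ * Xᴴ := by rw [← Matrix.mul_assoc, hSS]
  have haux3 : T * (T⁻¹ * Xᴴ) = Xᴴ := by rw [← Matrix.mul_assoc, hTS, Matrix.one_mul]
  have hD0 : Wᴴ * W = Matrix.fromBlocks (X * A⁻¹ * Xᴴ) (-X) (-Xᴴ) A := by
    rw [hW, Matrix.fromBlocks_conjTranspose, Matrix.fromBlocks_multiply]
    simp only [Matrix.conjTranspose_mul, Matrix.conjTranspose_conjTranspose, hSH, hTH,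
      Matrix.conjTranspose_zero, Matrix.conjTranspose_neg, Matrix.mul_zero, Matrix.zero_mul,
      add_zero, Matrix.mul_neg, Matrix.neg_mul, neg_neg, Matrix.mul_assoc, haux1, haux3,
      hST, hTT, Matrix.mul_one]
  have hD0psd : (Matrix.fromBlocks (X * A⁻¹ * Xᴴ) (-X) (-Xᴴ) A).PosSemidef := by
    rw [← hD0]
    exact Matrix.posSemidef_conjTranspose_mul_self W
  have hsum : Matrix.fromBlocks A X Xᴴ B + Matrix.fromBlocks (X * A⁻¹ * Xᴴ) (-X) (-Xᴴ) A =
      Matrix.fromBlocks (A + X * A⁻¹ * Xᴴ) 0 0 (A + B) := by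
    rw [Matrix.fromBlocks_add, add_neg_cancel, add_neg_cancel, add_comm B A]
  have htoppsd : (A + X * A⁻¹ * Xᴴ).PosSemidef := hA.posSemidef.add hXAX'
  have h2 : (((K : ℂ) • 1 : Matrix m m ℂ) - (A + X * A⁻¹ * Xᴴ)).PosSemidef :=
    smul_one_sub_posSemidef htoppsd h1
  have h3 : (((K : ℂ) • 1 : Matrix m m ℂ) - (A + B)).PosSemidef :=
    smul_one_sub_posSemidef hABpsd le_rfl
  have hN : (((K : ℂ) • 1 : Matrix (m ⊕ m) (m ⊕ m) ℂ) -
      Matrix.fromBlocks (A + X * A⁻¹ * Xᴴ) 0 0 (A + B)).PosSemidef := by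
    have e : ((K : ℂ) • 1 : Matrix (m ⊕ m) (m ⊕ m) ℂ) -
        Matrix.fromBlocks (A + X * A⁻¹ * Xᴴ) 0 0 (A + B) =
        Matrix.fromBlocks ((K : ℂ) • 1 - (A + X * A⁻¹ * Xᴴ)) 0 0 ((K : ℂ) • 1 - (A + B)) := by
      rw [← Matrix.fromBlocks_one, Matrix.fromBlocks_smul]
      rw [sub_eq_add_neg, Matrix.fromBlocks_neg, Matrix.fromBlocks_add]
      simp [sub_eq_add_neg]
    rw [e]
    exact posSemidef_fromBlocks_diag h2 h3
  have hfinal : (((K : ℂ) • 1 : Matrix (m ⊕ m) (m ⊕ m) ℂ) -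
      Matrix.fromBlocks A X Xᴴ B).PosSemidef := by
    have e : ((K : ℂ) • 1 : Matrix (m ⊕ m) (m ⊕ m) ℂ) - Matrix.fromBlocks A X Xᴴ B =
        (((K : ℂ) • 1 : Matrix (m ⊕ m) (m ⊕ m) ℂ) -
          Matrix.fromBlocks (A + X * A⁻¹ * Xᴴ) 0 0 (A + B)) +
        Matrix.fromBlocks (X * A⁻¹ * Xᴴ) (-X) (-Xᴴ) A := by
      rw [← hsum]
      abel
    rw [e]
    exact hN.add hD0psd
  have hle : opNorm (Matrix.fromBlocks A X Xᴴ B) ≤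
      opNorm ((K : ℂ) • (1 : Matrix (m ⊕ m) (m ⊕ m) ℂ)) := opNorm_mono hM hfinal
  refine hle.trans ?_
  have hK0 : 0 ≤ K := norm_nonneg _
  calc opNorm ((K : ℂ) • (1 : Matrix (m ⊕ m) (m ⊕ m) ℂ))
      = ‖Matrix.toEuclideanCLM (𝕜 := ℂ) ((K : ℂ) • (1 : Matrix (m ⊕ m) (m ⊕ m) ℂ))‖ := rfl
    _ = ‖(K : ℂ) • (1 : EuclideanSpace ℂ (m ⊕ m) →L[ℂ] EuclideanSpace ℂ (m ⊕ m))‖ := by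
        rw [_root_.map_smul, _root_.map_one]
    _ ≤ ‖(K : ℂ)‖ * ‖(1 : EuclideanSpace ℂ (m ⊕ m) →L[ℂ] EuclideanSpace ℂ (m ⊕ m))‖ :=
        ContinuousLinearMap.opNorm_smul_le _ _
    _ ≤ K * 1 := by
        apply mul_le_mul
        · simp [Complex.norm_real, abs_of_nonneg hK0]
        · exact ContinuousLinearMap.norm_id_le
        · exact norm_nonneg _
        · exact hK0
    _ = K := mul_one K

end Stmt4Aux

theorem stmt_4 {n : ℕ} (A X : Matrix (Fin n) (Fin n) ℂ) (hA : A.PosDef)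
    (hαβ : opNorm (A + Xᴴ * A⁻¹ * X) = opNorm (A + X * A⁻¹ * Xᴴ)) :
    (∀ B : Matrix (Fin n) (Fin n) ℂ, B.IsHermitian → (B - Xᴴ * A⁻¹ * X).PosSemidef →
      opNorm (Matrix.fromBlocks A X Xᴴ B) ≤ opNorm (A + B)) ∧
    (∀ C : Matrix (Fin n) (Fin n) ℂ, C.IsHermitian → (C - X * A⁻¹ * Xᴴ).PosSemidef →
      opNorm (Matrix.fromBlocks A Xᴴ X C) ≤ opNorm (A + C)) := by
  have hAinv : (A⁻¹).PosSemidef := hA.inv.posSemidef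
  constructor
  · intro B hBherm hBpsd
    apply Stmt4Aux.main A X B hA ?_ hBpsd
    rw [← hαβ]
    apply Stmt4Aux.opNorm_mono (hA.posSemidef.add (hAinv.conjTranspose_mul_mul_same X))
    simpa [add_sub_add_left_eq_sub] using hBpsd
  · intro C hCherm hCpsd
    have h := Stmt4Aux.main A Xᴴ C hA ?_ ?_
    · simpa only [Matrix.conjTranspose_conjTranspose] using h
    · rw [Matrix.conjTranspose_conjTranspose, hαβ]
      apply Stmt4Aux.opNorm_mono (hA.posSemidef.add (hAinv.mul_mul_conjTranspose_same X))
      simpa [add_sub_add_left_eq_sub] using hCpsd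
    · simpa only [Matrix.conjTranspose_conjTranspose] using hCpsd
end

section
/- For every positive definite n×n complex matrix A and every unitary n×n matrix U, one has ||A + A⁻¹|| ≤ ||A + U* A⁻¹ U||. -/
set_option synthInstance.maxHeartbeats 1000000
set_option maxHeartbeats 1000000


open scoped Matrix ComplexOrder

namespace StmtAux

open Matrix

variable {n : ℕ}

/-- Conjugation by a unitary preserves the operator norm. -/
lemma opNorm_unitary_conj (M V : Matrix (Fin n) (Fin n) ℂ) (hV : star V * V = 1) :
    opNorm (V * M * star V) = opNorm M := by
  have hV2 : V * star V = 1 := mul_eq_one_comm.mp hV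
  have hu : Matrix.toEuclideanCLM (𝕜 := ℂ) V ∈
      unitary (EuclideanSpace ℂ (Fin n) →L[ℂ] EuclideanSpace ℂ (Fin n)) := by
    rw [Unitary.mem_iff]
    constructor
    · rw [← map_star, ← _root_.map_mul, hV, _root_.map_one]
    · rw [← map_star, ← _root_.map_mul, hV2, _root_.map_one]
  unfold opNorm
  rw [_root_.map_mul, _root_.map_mul, map_star]
  rw [CStarRing.norm_mul_mem_unitary _ (Unitary.star_mem hu),
    CStarRing.norm_mem_unitary_mul _ hu]

lemma opNorm_diagonal_le (v : Fin n → ℂ) (c : ℝ) (hc : 0 ≤ c) (h : ∀ i, ‖v i‖ ≤ c) :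
    opNorm (Matrix.diagonal v) ≤ c := by
  apply ContinuousLinearMap.opNorm_le_bound _ hc
  intro x
  rw [EuclideanSpace.norm_eq, EuclideanSpace.norm_eq]
  rw [show c * Real.sqrt (∑ i, ‖x i‖ ^ 2) = Real.sqrt (c ^ 2 * ∑ i, ‖x i‖ ^ 2) by
    rw [Real.sqrt_mul (by positivity), Real.sqrt_sq hc]]
  apply Real.sqrt_le_sqrt
  rw [Finset.mul_sum]
  apply Finset.sum_le_sum
  intro i _
  have hcoord : (Matrix.toEuclideanCLM (𝕜 := ℂ) (Matrix.diagonal v) x) i = v i * x i := by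
    have := Matrix.ofLp_toEuclideanCLM (𝕜 := ℂ) (Matrix.diagonal v) x
    have h2 : WithLp.ofLp (Matrix.toEuclideanCLM (𝕜 := ℂ)
        (Matrix.diagonal v) x) i = (Matrix.diagonal v *ᵥ WithLp.ofLp x) i := by
      rw [this]
    simpa [Matrix.toLin'_apply, Matrix.mulVec_diagonal] using h2
  rw [hcoord, norm_mul, mul_pow]
  have h2 : ‖v i‖ ^ 2 ≤ c ^ 2 := by nlinarith [norm_nonneg (v i), h i]
  exact mul_le_mul_of_nonneg_right h2 (by positivity)

lemma re_q_le_opNorm (M : Matrix (Fin n) (Fin n) ℂ) (x : Fin n → ℂ)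
    (hx : dotProduct (star x) x = 1) :
    (dotProduct (star x) (M *ᵥ x)).re ≤ opNorm M := by
  set y : EuclideanSpace ℂ (Fin n) := (WithLp.equiv 2 _).symm x with hy
  have hinner : (inner ℂ y (Matrix.toEuclideanCLM (𝕜 := ℂ) M y) : ℂ)
      = dotProduct (star x) (M *ᵥ x) := by
    rw [hy, EuclideanSpace.inner_eq_star_dotProduct, dotProduct_comm]
    rfl
  have hynorm : ‖y‖ = 1 := by
    have h1 : (inner ℂ y y : ℂ) = 1 := by
      rw [hy, EuclideanSpace.inner_eq_star_dotProduct, dotProduct_comm]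
      exact hx
    have h2 : (‖y‖ : ℝ) ^ 2 = 1 := by
      have := inner_self_eq_norm_sq (𝕜 := ℂ) y
      rw [h1] at this
      simpa using this.symm
    nlinarith [norm_nonneg y]
  calc (dotProduct (star x) (M *ᵥ x)).re
      = (inner ℂ y (Matrix.toEuclideanCLM (𝕜 := ℂ) M y) : ℂ).re := by rw [hinner]
    _ ≤ ‖(inner ℂ y (Matrix.toEuclideanCLM (𝕜 := ℂ) M y) : ℂ)‖ := Complex.re_le_norm _
    _ ≤ ‖y‖ * ‖Matrix.toEuclideanCLM (𝕜 := ℂ) M y‖ := norm_inner_le_norm _ _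
    _ ≤ ‖y‖ * (‖Matrix.toEuclideanCLM (𝕜 := ℂ) M‖ * ‖y‖) := by
        gcongr
        exact ContinuousLinearMap.le_opNorm _ _
    _ = opNorm M := by rw [hynorm]; simp [opNorm]

lemma diag_conj_sub_smul (V : Matrix (Fin n) (Fin n) ℂ) (hVV : V * star V = 1)
    (d : Fin n → ℂ) (c : ℂ) :
    V * Matrix.diagonal d * star V - c • 1 = V * Matrix.diagonal (fun i => d i - c) * star V := by
  have h1 : Matrix.diagonal (fun i => d i - c) = Matrix.diagonal d - c • (1 : Matrix (Fin n) (Fin n) ℂ) := by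
    ext i j
    by_cases h : i = j <;>
      simp [Matrix.diagonal_apply, h, Matrix.one_apply, Matrix.smul_apply]
  rw [h1, Matrix.mul_sub, Matrix.sub_mul]
  congr 1
  rw [Matrix.mul_smul, Matrix.smul_mul, mul_one, hVV]

lemma q_ge_of_posSemidef {M : Matrix (Fin n) (Fin n) ℂ} {c : ℂ}
    (hP : (M - c • 1).PosSemidef) (x : Fin n → ℂ) :
    c * dotProduct (star x) x ≤ dotProduct (star x) (M *ᵥ x) := by
  have h := hP.dotProduct_mulVec_nonneg x
  have heq : dotProduct (star x) ((M - c • 1) *ᵥ x)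
      = dotProduct (star x) (M *ᵥ x) - c * dotProduct (star x) x := by
    rw [Matrix.sub_mulVec, dotProduct_sub]
    congr 1
    rw [Matrix.smul_mulVec, Matrix.one_mulVec, dotProduct_smul, smul_eq_mul]
  rw [heq] at h
  exact sub_nonneg.mp h

lemma scalar_bound {a b t : ℝ} (ha : 0 < a) (hat : a ≤ t) (htb : t ≤ b) :
    t + t⁻¹ ≤ max (a + a⁻¹) (b + b⁻¹) := by
  have ht : 0 < t := lt_of_lt_of_le ha hat
  have hb : 0 < b := lt_of_lt_of_le ht htb
  rcases le_total t 1 with h1 | h1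
  · apply le_max_of_le_left
    rw [← sub_nonneg]
    have heq : a + a⁻¹ - (t + t⁻¹) = (t - a) * (1 - a * t) / (a * t) := by
      field_simp
      ring
    rw [heq]
    apply div_nonneg _ (by positivity)
    have f1 : 0 ≤ t - a := by linarith
    have f2 : 0 ≤ 1 - a * t := by nlinarith
    exact mul_nonneg f1 f2
  · apply le_max_of_le_right
    rw [← sub_nonneg]
    have heq : b + b⁻¹ - (t + t⁻¹) = (b - t) * (b * t - 1) / (b * t) := by
      field_simp
      ring
    rw [heq]
    apply div_nonneg _ (by positivity)
    have f1 : 0 ≤ b - t := by linarith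
    have f2 : 0 ≤ b * t - 1 := by nlinarith
    exact mul_nonneg f1 f2

end StmtAux

theorem stmt_6 {n : ℕ} (A U : Matrix (Fin n) (Fin n) ℂ)
    (hA : A.PosDef) (hU : Uᴴ * U = 1) :
    opNorm (A + A⁻¹) ≤ opNorm (A + Uᴴ * A⁻¹ * U) := by
  rcases Nat.eq_zero_or_pos n with hn | hn
  · subst hn
    unfold opNorm
    rw [Subsingleton.elim (Matrix.toEuclideanCLM (𝕜 := ℂ) (A + A⁻¹))
      (Matrix.toEuclideanCLM (𝕜 := ℂ) (A + Uᴴ * A⁻¹ * U))]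
  haveI : Nonempty (Fin n) := Fin.pos_iff_nonempty.mp hn
  have hH : A.IsHermitian := hA.1
  set μ : Fin n → ℝ := hH.eigenvalues with hμdef
  have hμpos : ∀ i, 0 < μ i := fun i => hA.eigenvalues_pos i
  set V : Matrix (Fin n) (Fin n) ℂ := (Matrix.IsHermitian.eigenvectorUnitary hH : Matrix (Fin n) (Fin n) ℂ) with hVdef
  have hV1 : star V * V = 1 := by
    have h := (Matrix.IsHermitian.eigenvectorUnitary hH).2
    rw [Matrix.mem_unitaryGroup_iff'] at h
    exact h
  have hV2 : V * star V = 1 := mul_eq_one_comm.mp hV1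
  have hspec : A = V * Matrix.diagonal (fun i => (μ i : ℂ)) * star V := by
    have h := Matrix.IsHermitian.spectral_theorem hH
    rw [Unitary.conjStarAlgAut_apply] at h
    exact h
  have hdet : IsUnit A.det := isUnit_iff_ne_zero.mpr hA.det_pos.ne'
  have hinv : A⁻¹ = V * Matrix.diagonal (fun i => ((μ i)⁻¹ : ℂ)) * star V := by
    apply Matrix.inv_eq_right_inv
    conv_lhs => rw [hspec]
    have h1 : V * Matrix.diagonal (fun i => (μ i : ℂ)) * star V *
        (V * Matrix.diagonal (fun i => ((μ i)⁻¹ : ℂ)) * star V)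
        = V * (Matrix.diagonal (fun i => (μ i : ℂ)) * ((star V * V) *
          (Matrix.diagonal (fun i => ((μ i)⁻¹ : ℂ)) * star V))) := by
      simp only [Matrix.mul_assoc]
    rw [h1, hV1, one_mul, ← Matrix.mul_assoc (Matrix.diagonal fun i => (μ i : ℂ)),
      Matrix.diagonal_mul_diagonal]
    have h2 : (fun i => (μ i : ℂ) * ((μ i)⁻¹ : ℂ)) = fun _ => (1 : ℂ) := by
      funext i
      rw [mul_inv_cancel₀]
      exact_mod_cast (hμpos i).ne'
    rw [h2, Matrix.diagonal_one, one_mul, hV2]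
  have hsum : A + A⁻¹ = V * Matrix.diagonal (fun i => ((μ i + (μ i)⁻¹ : ℝ) : ℂ)) * star V := by
    rw [hinv, hspec, ← Matrix.add_mul, ← Matrix.mul_add, Matrix.diagonal_add]
    congr 2
    funext i
    push_cast
    ring
  obtain ⟨imax, hmax⟩ := Finite.exists_max μ
  obtain ⟨imin, hmin⟩ := Finite.exists_min μ
  set c : ℝ := max (μ imin + (μ imin)⁻¹) (μ imax + (μ imax)⁻¹) with hcdef
  have hcpos : 0 ≤ c := le_max_of_le_left (add_pos (hμpos imin) (inv_pos.mpr (hμpos imin))).le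
  -- upper bound
  have hupper : opNorm (A + A⁻¹) ≤ c := by
    rw [hsum, StmtAux.opNorm_unitary_conj _ _ hV1]
    apply StmtAux.opNorm_diagonal_le _ _ hcpos
    intro i
    have : ‖((μ i + (μ i)⁻¹ : ℝ) : ℂ)‖ = μ i + (μ i)⁻¹ := by
      rw [Complex.norm_real, Real.norm_eq_abs,
        abs_of_pos (add_pos (hμpos i) (inv_pos.mpr (hμpos i)))]
    rw [this]
    exact StmtAux.scalar_bound (hμpos imin) (hmin i) (hmax i)
  -- positive semidefiniteness facts
  have hpsA : (A - ((μ imin : ℝ) : ℂ) • 1).PosSemidef := by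
    rw [hspec, StmtAux.diag_conj_sub_smul V hV2]
    have h3 : (fun i => ((μ i : ℝ) : ℂ) - ((μ imin : ℝ) : ℂ)) =
        fun i => ((μ i - μ imin : ℝ) : ℂ) := by
      funext i; push_cast; ring
    rw [h3]
    have h4 : Matrix.PosSemidef (Matrix.diagonal (fun i => ((μ i - μ imin : ℝ) : ℂ))) := by
      rw [Matrix.posSemidef_diagonal_iff]
      intro i
      rw [Complex.zero_le_real]
      linarith [hmin i]
    have h5 := h4.mul_mul_conjTranspose_same V
    rwa [← Matrix.star_eq_conjTranspose] at h5
  have hpsInv : (Uᴴ * A⁻¹ * U - (((μ imax)⁻¹ : ℝ) : ℂ) • 1).PosSemidef := by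
    have h0 : (A⁻¹ - (((μ imax)⁻¹ : ℝ) : ℂ) • 1).PosSemidef := by
      rw [hinv, StmtAux.diag_conj_sub_smul V hV2]
      have h3 : (fun i => ((μ i : ℂ))⁻¹ - (((μ imax)⁻¹ : ℝ) : ℂ)) =
          fun i => (((μ i)⁻¹ - (μ imax)⁻¹ : ℝ) : ℂ) := by
        funext i; push_cast; ring
      rw [h3]
      have h4 : Matrix.PosSemidef (Matrix.diagonal (fun i => (((μ i)⁻¹ - (μ imax)⁻¹ : ℝ) : ℂ))) := by
        rw [Matrix.posSemidef_diagonal_iff]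
        intro i
        rw [Complex.zero_le_real, sub_nonneg]
        exact inv_anti₀ (hμpos i) (hmax i)
      have h5 := h4.mul_mul_conjTranspose_same V
      rwa [← Matrix.star_eq_conjTranspose] at h5
    have h6 := h0.conjTranspose_mul_mul_same U
    have h7 : Uᴴ * (A⁻¹ - (((μ imax)⁻¹ : ℝ) : ℂ) • 1) * U
        = Uᴴ * A⁻¹ * U - (((μ imax)⁻¹ : ℝ) : ℂ) • 1 := by
      rw [Matrix.mul_sub, Matrix.sub_mul, Matrix.mul_smul, Matrix.smul_mul, mul_one, hU]
    rwa [h7] at h6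
  -- lower bound 2 : μmax + μmax⁻¹ ≤ opNorm M'
  set M' : Matrix (Fin n) (Fin n) ℂ := A + Uᴴ * A⁻¹ * U with hM'def
  have hbound2 : μ imax + (μ imax)⁻¹ ≤ opNorm M' := by
    set v : Fin n → ℂ := ⇑(Matrix.IsHermitian.eigenvectorBasis hH imax) with hvdef
    have hv1 : dotProduct (star v) v = 1 := by
      have h := (Matrix.IsHermitian.eigenvectorBasis hH).orthonormal.1 imax
      have h2 : (inner ℂ (Matrix.IsHermitian.eigenvectorBasis hH imax)
          (Matrix.IsHermitian.eigenvectorBasis hH imax) : ℂ) = 1 := by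
        rw [inner_self_eq_norm_sq_to_K, h]; norm_num
      rw [EuclideanSpace.inner_eq_star_dotProduct, dotProduct_comm] at h2
      exact h2
    have hq1 : dotProduct (star v) (A *ᵥ v) = ((μ imax : ℝ) : ℂ) := by
      rw [hvdef, Matrix.IsHermitian.mulVec_eigenvectorBasis, dotProduct_smul, ← hvdef, hv1]
      simp [Complex.real_smul, hμdef]
    have h2 := StmtAux.q_ge_of_posSemidef hpsInv v
    rw [hv1, mul_one] at h2
    have hge : ((μ imax + (μ imax)⁻¹ : ℝ) : ℂ) ≤ dotProduct (star v) (M' *ᵥ v) := by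
      rw [hM'def, Matrix.add_mulVec, dotProduct_add, hq1]
      calc ((μ imax + (μ imax)⁻¹ : ℝ) : ℂ)
          = ((μ imax : ℝ) : ℂ) + (((μ imax)⁻¹ : ℝ) : ℂ) := by push_cast; ring
        _ ≤ ((μ imax : ℝ) : ℂ) + dotProduct (star v) ((Uᴴ * A⁻¹ * U) *ᵥ v) :=
            add_le_add_right h2 _
    have h3 := StmtAux.re_q_le_opNorm M' v hv1
    have h4 := (Complex.le_def.mp hge).1
    rw [Complex.ofReal_re] at h4
    exact h4.trans h3
  -- lower bound 1 : μmin + μmin⁻¹ ≤ opNorm M'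
  have hbound1 : μ imin + (μ imin)⁻¹ ≤ opNorm M' := by
    set v : Fin n → ℂ := ⇑(Matrix.IsHermitian.eigenvectorBasis hH imin) with hvdef
    have hv1 : dotProduct (star v) v = 1 := by
      have h := (Matrix.IsHermitian.eigenvectorBasis hH).orthonormal.1 imin
      have h2 : (inner ℂ (Matrix.IsHermitian.eigenvectorBasis hH imin)
          (Matrix.IsHermitian.eigenvectorBasis hH imin) : ℂ) = 1 := by
        rw [inner_self_eq_norm_sq_to_K, h]; norm_num
      rw [EuclideanSpace.inner_eq_star_dotProduct, dotProduct_comm] at h2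
      exact h2
    set x : Fin n → ℂ := Uᴴ *ᵥ v with hxdef
    have hUU : U * Uᴴ = 1 := mul_eq_one_comm.mp hU
    have hUx : U *ᵥ x = v := by
      rw [hxdef, Matrix.mulVec_mulVec, hUU, Matrix.one_mulVec]
    have hx1 : dotProduct (star x) x = 1 := by
      rw [hxdef, Matrix.star_mulVec, Matrix.conjTranspose_conjTranspose,
        ← Matrix.dotProduct_mulVec, Matrix.mulVec_mulVec, hUU, Matrix.one_mulVec, hv1]
    -- A⁻¹ acts on v
    have hAv : A *ᵥ v = (μ imin) • v := Matrix.IsHermitian.mulVec_eigenvectorBasis hH imin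
    have hAiv : A⁻¹ *ᵥ v = (((μ imin)⁻¹ : ℝ) : ℂ) • v := by
      have h5 : A⁻¹ *ᵥ (A *ᵥ v) = v := by
        rw [Matrix.mulVec_mulVec, Matrix.nonsing_inv_mul A hdet, Matrix.one_mulVec]
      rw [hAv, Matrix.mulVec_smul] at h5
      have h6 : ((μ imin : ℝ) : ℂ) ≠ 0 := by exact_mod_cast (hμpos imin).ne'
      funext i
      have h7 := congrFun h5 i
      simp only [Pi.smul_apply, Complex.real_smul, smul_eq_mul] at h7 ⊢
      have h8 : ((μ imin : ℝ) : ℂ)⁻¹ * (((μ imin : ℝ) : ℂ) * (A⁻¹ *ᵥ v) i)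
          = ((μ imin : ℝ) : ℂ)⁻¹ * v i := by rw [h7]
      rw [inv_mul_cancel_left₀ h6] at h8
      rw [h8]
      push_cast
      ring
    have hq2 : dotProduct (star x) ((Uᴴ * A⁻¹ * U) *ᵥ x) = (((μ imin)⁻¹ : ℝ) : ℂ) := by
      rw [← Matrix.mulVec_mulVec, ← Matrix.mulVec_mulVec, hUx, hAiv, Matrix.mulVec_smul,
        dotProduct_smul, ← hxdef, hx1]
      simp
    have h2 := StmtAux.q_ge_of_posSemidef hpsA x
    rw [hx1, mul_one] at h2
    have hge : ((μ imin + (μ imin)⁻¹ : ℝ) : ℂ) ≤ dotProduct (star x) (M' *ᵥ x) := by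
      rw [hM'def, Matrix.add_mulVec, dotProduct_add, hq2]
      calc ((μ imin + (μ imin)⁻¹ : ℝ) : ℂ)
          = ((μ imin : ℝ) : ℂ) + (((μ imin)⁻¹ : ℝ) : ℂ) := by push_cast; ring
        _ ≤ dotProduct (star x) (A *ᵥ x) + (((μ imin)⁻¹ : ℝ) : ℂ) :=
            add_le_add_left h2 _
    have h3 := StmtAux.re_q_le_opNorm M' x hx1
    have h4 := (Complex.le_def.mp hge).1
    rw [Complex.ofReal_re] at h4
    exact h4.trans h3
  exact hupper.trans (max_le hbound1 hbound2)
end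

section
/- Let A be a positive definite n×n complex matrix, U a unitary n×n matrix, and α ≥ 1 a real number. Then the operator norm of the block matrix [[A, I], [I, α A⁻¹]] is at most ||A + α U* A⁻¹ U||. -/
open scoped Matrix ComplexOrder

namespace StmtAux
open Matrix

variable {m : Type*} [Fintype m] [DecidableEq m]

lemma inner_clm (M : Matrix m m ℂ) (x : m → ℂ) :
    (inner ℂ ((WithLp.equiv 2 _).symm x) (Matrix.toEuclideanCLM (𝕜 := ℂ) M ((WithLp.equiv 2 _).symm x)) : ℂ)
      = star x ⬝ᵥ (M *ᵥ x) := by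
  rw [EuclideanSpace.inner_eq_star_dotProduct, dotProduct_comm]; rfl

lemma re_quadForm_le (M : Matrix m m ℂ) (x : m → ℂ) :
    (star x ⬝ᵥ (M *ᵥ x)).re ≤ opNorm M * (star x ⬝ᵥ x).re := by
  set T := Matrix.toEuclideanCLM (𝕜 := ℂ) M with hT
  set x' : EuclideanSpace ℂ m := (WithLp.equiv 2 _).symm x with hx'
  have h1 : (inner ℂ x' (T x') : ℂ) = star x ⬝ᵥ (M *ᵥ x) := inner_clm M x
  have h2 : (inner ℂ x' x' : ℂ) = star x ⬝ᵥ x := by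
    rw [EuclideanSpace.inner_eq_star_dotProduct, dotProduct_comm]; rfl
  have h3 : (star x ⬝ᵥ x).re = ‖x'‖ ^ 2 := by
    have := inner_self_eq_norm_sq (𝕜 := ℂ) x'
    rw [h2] at this
    simpa using this
  rw [← h1, h3]
  calc (inner ℂ x' (T x') : ℂ).re ≤ ‖(inner ℂ x' (T x') : ℂ)‖ := Complex.re_le_norm _
    _ ≤ ‖x'‖ * ‖T x'‖ := norm_inner_le_norm _ _
    _ ≤ ‖x'‖ * (‖T‖ * ‖x'‖) := by
        exact mul_le_mul_of_nonneg_left (T.le_opNorm x') (norm_nonneg _)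
    _ = opNorm M * ‖x'‖ ^ 2 := by rw [opNorm]; ring


lemma isPositive_toEuclideanCLM {M : Matrix m m ℂ} (hM : M.PosSemidef) :
    (Matrix.toEuclideanCLM (𝕜 := ℂ) M).IsPositive := by
  rw [ContinuousLinearMap.isPositive_def']
  constructor
  · rw [isSelfAdjoint_iff, ← map_star]
    congr 1
    rw [Matrix.star_eq_conjTranspose, hM.1]
  · intro x
    rw [ContinuousLinearMap.reApplyInnerSelf]
    have hx : x = (WithLp.equiv 2 _).symm (WithLp.equiv 2 _ x) := rfl
    have h0 := hM.dotProduct_mulVec_nonneg (WithLp.equiv 2 _ x)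
    rw [Complex.le_def] at h0
    have h1 : (inner ℂ x (Matrix.toEuclideanCLM (𝕜 := ℂ) M x) : ℂ)
        = star (WithLp.equiv 2 _ x) ⬝ᵥ (M *ᵥ (WithLp.equiv 2 _ x)) := by
      conv_lhs => rw [hx]
      exact inner_clm M _
    have h2 : RCLike.re (inner ℂ (Matrix.toEuclideanCLM (𝕜 := ℂ) M x) x : ℂ)
        = RCLike.re (inner ℂ x (Matrix.toEuclideanCLM (𝕜 := ℂ) M x) : ℂ) := by
      rw [← inner_conj_symm]
      exact RCLike.conj_re _
    rw [h2, h1]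
    simpa using h0.1

lemma opNorm_le_of_posSemidef {M : Matrix m m ℂ} {c : ℝ} (hc : 0 ≤ c)
    (hM : M.PosSemidef) (h : ((c : ℂ) • 1 - M).PosSemidef) : opNorm M ≤ c := by
  rw [opNorm]
  set T := Matrix.toEuclideanCLM (𝕜 := ℂ) M with hT
  have hpos : 0 ≤ T := (ContinuousLinearMap.nonneg_iff_isPositive T).mpr
    (isPositive_toEuclideanCLM hM)
  rw [CStarAlgebra.norm_le_iff_le_algebraMap T hc hpos]
  have h2 : (algebraMap ℝ (EuclideanSpace ℂ m →L[ℂ] EuclideanSpace ℂ m) c) - T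
      = Matrix.toEuclideanCLM (𝕜 := ℂ) ((c : ℂ) • 1 - M) := by
    rw [map_sub, _root_.map_smul, _root_.map_one, Algebra.algebraMap_eq_smul_one]
    congr 1
  rw [ContinuousLinearMap.le_def, h2]
  exact isPositive_toEuclideanCLM h


section Phi

variable (V : Matrix m m ℂ)

/-- Conjugation of a real diagonal by `V`. -/
noncomputable def phi (d : m → ℝ) : Matrix m m ℂ :=
  V * Matrix.diagonal (fun i => (d i : ℂ)) * Vᴴ

variable {V}

lemma diag_herm (d : m → ℝ) : (Matrix.diagonal (fun i => (d i : ℂ))).IsHermitian := by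
  rw [Matrix.isHermitian_diagonal_iff]
  intro i
  exact Complex.conj_ofReal (d i)

lemma diag_smul (r : ℝ) (d : m → ℝ) :
    Matrix.diagonal (fun i => ((r * d i : ℝ) : ℂ)) = (r : ℂ) • Matrix.diagonal (fun i => (d i : ℂ)) := by
  have h : (fun i => ((r * d i : ℝ) : ℂ)) = (r : ℂ) • (fun i => ((d i : ℝ) : ℂ)) := by
    funext i
    simp [Pi.smul_apply, smul_eq_mul]
  rw [h, Matrix.diagonal_smul]

lemma phi_isHermitian (d : m → ℝ) : (phi V d).IsHermitian :=
  Matrix.isHermitian_mul_mul_conjTranspose V (diag_herm d)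

lemma phi_quad (d : m → ℝ) (x : m → ℂ) :
    star x ⬝ᵥ (phi V d *ᵥ x)
      = star (Vᴴ *ᵥ x) ⬝ᵥ (Matrix.diagonal (fun i => (d i : ℂ)) *ᵥ (Vᴴ *ᵥ x)) := by
  unfold phi
  rw [← Matrix.mulVec_mulVec, ← Matrix.mulVec_mulVec, Matrix.dotProduct_mulVec (star x),
    Matrix.star_mulVec, Matrix.conjTranspose_conjTranspose]

lemma phi_posSemidef {d : m → ℝ} (hd : ∀ i, 0 ≤ d i) : (phi V d).PosSemidef := by
  refine .of_dotProduct_mulVec_nonneg (phi_isHermitian d) fun x => ?_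
  rw [phi_quad]
  have hdiag : (Matrix.diagonal (fun i => (d i : ℂ))).PosSemidef :=
    Matrix.posSemidef_diagonal_iff.mpr fun i => by
      rw [Complex.zero_le_real]; exact hd i
  exact hdiag.dotProduct_mulVec_nonneg _

lemma phi_posDef (hV2 : V * Vᴴ = 1) {d : m → ℝ} (hd : ∀ i, 0 < d i) : (phi V d).PosDef := by
  refine .of_dotProduct_mulVec_pos (phi_isHermitian d) fun x hx => ?_
  rw [phi_quad]
  have hdiag : (Matrix.diagonal (fun i => (d i : ℂ))).PosDef :=
    Matrix.posDef_diagonal_iff.mpr fun i => by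
      rw [Complex.zero_lt_real]; exact hd i
  refine hdiag.dotProduct_mulVec_pos fun hzero => hx ?_
  have : V *ᵥ (Vᴴ *ᵥ x) = V *ᵥ 0 := by rw [hzero]
  rwa [Matrix.mulVec_mulVec, hV2, Matrix.one_mulVec, Matrix.mulVec_zero] at this

lemma phi_mul (hV1 : Vᴴ * V = 1) (d e : m → ℝ) :
    phi V d * phi V e = phi V (fun i => d i * e i) := by
  unfold phi
  rw [mul_assoc, mul_assoc, ← mul_assoc Vᴴ, ← mul_assoc Vᴴ, hV1, one_mul,
    ← mul_assoc, ← mul_assoc, mul_assoc V, Matrix.diagonal_mul_diagonal]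
  push_cast
  rfl

lemma phi_add (d e : m → ℝ) : phi V d + phi V e = phi V (fun i => d i + e i) := by
  unfold phi
  rw [← add_mul, ← mul_add, Matrix.diagonal_add]
  push_cast
  rfl

lemma phi_sub (d e : m → ℝ) : phi V d - phi V e = phi V (fun i => d i - e i) := by
  unfold phi
  rw [← sub_mul, ← mul_sub, Matrix.diagonal_sub]
  push_cast
  rfl

lemma phi_smul (r : ℝ) (d : m → ℝ) : (r : ℂ) • phi V d = phi V (fun i => r * d i) := by
  unfold phi
  rw [show (fun i => ((r * d i : ℝ) : ℂ)) = fun i => (((r * d i : ℝ)) : ℂ) from rfl]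
  rw [diag_smul, Matrix.mul_smul, Matrix.smul_mul]

lemma phi_const (hV2 : V * Vᴴ = 1) (c : ℝ) :
    phi V (fun _ => c) = (c : ℂ) • 1 := by
  unfold phi
  have : Matrix.diagonal (fun _ : m => (c : ℂ)) = (c : ℂ) • 1 := by
    have h : (fun _ : m => (c : ℂ)) = (c : ℂ) • (fun _ : m => (1 : ℂ)) := by
      funext i; simp
    rw [h, Matrix.diagonal_smul, Matrix.diagonal_one]
  rw [this, Matrix.mul_smul, Matrix.smul_mul, mul_one, hV2]

lemma phi_one (hV2 : V * Vᴴ = 1) : phi V (fun _ => 1) = 1 := by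
  rw [phi_const hV2]; simp

lemma phi_inv (hV1 : Vᴴ * V = 1) (hV2 : V * Vᴴ = 1) {d : m → ℝ} (hd : ∀ i, d i ≠ 0) :
    (phi V d)⁻¹ = phi V (fun i => (d i)⁻¹) := by
  refine (Matrix.inv_eq_right_inv ?_)
  rw [phi_mul hV1]
  have : (fun i => d i * (d i)⁻¹) = fun _ => (1 : ℝ) := by
    funext i; exact mul_inv_cancel₀ (hd i)
  rw [this, phi_one hV2]

lemma ofReal_mul_re (r : ℝ) (z : ℂ) : ((r : ℂ) * z).re = r * z.re := by
  simp [Complex.mul_re]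

end Phi

end StmtAux


open Matrix StmtAux in
set_option maxHeartbeats 1000000 in
theorem stmt_7 {n : ℕ} (A U : Matrix (Fin n) (Fin n) ℂ)
    (hA : A.PosDef) (hU : Uᴴ * U = 1) (α : ℝ) (hα : 1 ≤ α) :
    opNorm (Matrix.fromBlocks A 1 1 ((α : ℂ) • A⁻¹)) ≤
      opNorm (A + (α : ℂ) • (Uᴴ * A⁻¹ * U)) := by
  rcases Nat.eq_zero_or_pos n with hn | hn
  · subst hn
    have h0 : Matrix.toEuclideanCLM (𝕜 := ℂ)
        (Matrix.fromBlocks A 1 1 ((α : ℂ) • A⁻¹)) = 0 := by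
      ext x i
      exact (IsEmpty.false i).elim
    rw [opNorm, h0, norm_zero, opNorm]
    exact norm_nonneg _
  haveI : Nonempty (Fin n) := ⟨⟨0, hn⟩⟩
  classical
  set C := opNorm (A + (α : ℂ) • (Uᴴ * A⁻¹ * U)) with hCdef
  have hAH : A.IsHermitian := hA.isHermitian
  set a : Fin n → ℝ := hAH.eigenvalues with ha
  have hap : ∀ i, 0 < a i := fun i => hA.eigenvalues_pos i
  set V : Matrix (Fin n) (Fin n) ℂ :=
    (hAH.eigenvectorUnitary : Matrix (Fin n) (Fin n) ℂ) with hVdef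
  have hV1 : Vᴴ * V = 1 := by
    rw [← Matrix.star_eq_conjTranspose]
    exact Unitary.coe_star_mul_self hAH.eigenvectorUnitary
  have hV2 : V * Vᴴ = 1 := by
    rw [← Matrix.star_eq_conjTranspose]
    exact Unitary.coe_mul_star_self hAH.eigenvectorUnitary
  have hAphi : A = phi V a := by
    have h := hAH.spectral_theorem
    rw [h]
    rfl
  have hAinv : A⁻¹ = phi V (fun i => (a i)⁻¹) := by
    rw [hAphi, phi_inv hV1 hV2 (fun i => (hap i).ne')]
  have hAdet : IsUnit A.det := (Matrix.isUnit_iff_isUnit_det A).mp hA.isUnit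
  have hre : ∀ (N : Matrix (Fin n) (Fin n) ℂ), N.PosSemidef →
      ∀ x : Fin n → ℂ, 0 ≤ (star x ⬝ᵥ N *ᵥ x).re := by
    intro N hN x
    have h := hN.dotProduct_mulVec_nonneg x
    rw [Complex.le_def] at h
    simpa using h.1
  obtain ⟨i1, hi1⟩ := Finite.exists_max a
  obtain ⟨i0, hi0⟩ := Finite.exists_min a
  -- unit eigenvectors
  have hunit : ∀ j : Fin n, star ⇑(hAH.eigenvectorBasis j) ⬝ᵥ ⇑(hAH.eigenvectorBasis j) = 1 := by
    intro j
    have h := orthonormal_iff_ite.mp hAH.eigenvectorBasis.orthonormal j j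
    simp only [if_true, eq_self_iff_true] at h
    have h2 : (inner ℂ (hAH.eigenvectorBasis j) (hAH.eigenvectorBasis j) : ℂ)
        = star ⇑(hAH.eigenvectorBasis j) ⬝ᵥ ⇑(hAH.eigenvectorBasis j) := by
      rw [EuclideanSpace.inner_eq_star_dotProduct, dotProduct_comm]
    rw [← h2]
    simpa using h
  -- splitting the quadratic form of the RHS matrix
  have quad_split : ∀ x : Fin n → ℂ,
      (star x ⬝ᵥ (A + (α : ℂ) • (Uᴴ * A⁻¹ * U)) *ᵥ x)
        = star x ⬝ᵥ (A *ᵥ x) + (α : ℂ) * (star (U *ᵥ x) ⬝ᵥ (A⁻¹ *ᵥ (U *ᵥ x))) := by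
    intro x
    rw [Matrix.add_mulVec, dotProduct_add]
    congr 1
    rw [Matrix.smul_mulVec, dotProduct_smul, smul_eq_mul]
    congr 1
    rw [← Matrix.mulVec_mulVec, ← Matrix.mulVec_mulVec,
      Matrix.dotProduct_mulVec (star x), ← Matrix.star_mulVec]
  have hUorth : ∀ x : Fin n → ℂ, star (U *ᵥ x) ⬝ᵥ (U *ᵥ x) = star x ⬝ᵥ x := by
    intro x
    rw [Matrix.star_mulVec, ← Matrix.dotProduct_mulVec, Matrix.mulVec_mulVec, hU,
      Matrix.one_mulVec]
  have hinv_lb : ∀ y : Fin n → ℂ,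
      ((a i1)⁻¹ : ℝ) * (star y ⬝ᵥ y).re ≤ (star y ⬝ᵥ A⁻¹ *ᵥ y).re := by
    intro y
    have hdiff : (phi V (fun i => (a i)⁻¹ - (a i1)⁻¹)).PosSemidef :=
      phi_posSemidef fun i => sub_nonneg.mpr (inv_anti₀ (hap i) (hi1 i))
    have hsplit : A⁻¹ = phi V (fun i => (a i)⁻¹ - (a i1)⁻¹) + (((a i1)⁻¹ : ℝ) : ℂ) • 1 := by
      rw [← phi_const hV2 ((a i1)⁻¹ : ℝ), phi_add, hAinv]
      exact congrArg (phi V) (funext fun i => by ring)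
    rw [hsplit, Matrix.add_mulVec, dotProduct_add, Complex.add_re]
    have h1 : (star y ⬝ᵥ ((((a i1)⁻¹ : ℝ) : ℂ) • 1) *ᵥ y)
        = (((a i1)⁻¹ : ℝ) : ℂ) * (star y ⬝ᵥ y) := by
      rw [Matrix.smul_mulVec, dotProduct_smul, Matrix.one_mulVec, smul_eq_mul]
    rw [h1, ofReal_mul_re]
    linarith [hre _ hdiff y]
  have claimMax : a i1 + α * (a i1)⁻¹ ≤ C := by
    obtain ⟨x, hx1, hAx⟩ : ∃ x : Fin n → ℂ, star x ⬝ᵥ x = 1 ∧ A *ᵥ x = (a i1 : ℝ) • x :=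
      ⟨⇑(hAH.eigenvectorBasis i1), hunit i1, hAH.mulVec_eigenvectorBasis i1⟩
    have hq := re_quadForm_le (A + (α : ℂ) • (Uᴴ * A⁻¹ * U)) x
    rw [quad_split x, hx1] at hq
    have e1 : star x ⬝ᵥ (A *ᵥ x) = ((a i1 : ℝ) : ℂ) := by
      rw [hAx, dotProduct_smul, hx1, Complex.real_smul, mul_one]
    rw [e1, Complex.add_re, Complex.ofReal_re, ofReal_mul_re] at hq
    simp only [Complex.one_re, mul_one] at hq
    have hy := hinv_lb (U *ᵥ x)
    rw [hUorth x, hx1] at hy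
    simp only [Complex.one_re, mul_one] at hy
    have hα0 : (0:ℝ) < α := lt_of_lt_of_le one_pos hα
    nlinarith [hy, hq]
  have claimMin : a i0 + α * (a i0)⁻¹ ≤ C := by
    have hUU : U * Uᴴ = 1 := mul_eq_one_comm.mp hU
    obtain ⟨z, hz1, hAz⟩ : ∃ z : Fin n → ℂ, star z ⬝ᵥ z = 1 ∧ A *ᵥ z = (a i0 : ℝ) • z :=
      ⟨⇑(hAH.eigenvectorBasis i0), hunit i0, hAH.mulVec_eigenvectorBasis i0⟩
    have hAinvz : A⁻¹ *ᵥ z = (((a i0)⁻¹ : ℝ)) • z := by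
      have h1 : A⁻¹ *ᵥ (A *ᵥ z) = z := by
        rw [Matrix.mulVec_mulVec, Matrix.nonsing_inv_mul A hAdet, Matrix.one_mulVec]
      rw [hAz, Matrix.mulVec_smul] at h1
      have h2 := congrArg (fun w => (((a i0)⁻¹ : ℝ)) • w) h1
      rw [smul_smul, inv_mul_cancel₀ (hap i0).ne', one_smul] at h2
      rw [h2]
    set x : Fin n → ℂ := Uᴴ *ᵥ z with hxdef
    have hUx : U *ᵥ x = z := by
      rw [hxdef, Matrix.mulVec_mulVec, hUU, Matrix.one_mulVec]
    have hx1 : star x ⬝ᵥ x = 1 := by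
      have h := hUorth x
      rw [hUx] at h
      rw [← h]
      exact hz1
    have hA_lb : (a i0 : ℝ) ≤ (star x ⬝ᵥ A *ᵥ x).re := by
      have hdiff : (phi V (fun i => a i - a i0)).PosSemidef :=
        phi_posSemidef fun i => sub_nonneg.mpr (hi0 i)
      have hsplit : A = phi V (fun i => a i - a i0) + ((a i0 : ℝ) : ℂ) • 1 := by
        rw [← phi_const hV2 (a i0), phi_add, hAphi]
        exact congrArg (phi V) (funext fun i => by ring)
      rw [hsplit, Matrix.add_mulVec, dotProduct_add, Complex.add_re]
      have h1 : (star x ⬝ᵥ (((a i0 : ℝ) : ℂ) • 1) *ᵥ x)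
          = ((a i0 : ℝ) : ℂ) * (star x ⬝ᵥ x) := by
        rw [Matrix.smul_mulVec, dotProduct_smul, Matrix.one_mulVec, smul_eq_mul]
      rw [h1, hx1, ofReal_mul_re]
      simp only [Complex.one_re, mul_one]
      linarith [hre _ hdiff x]
    have hq := re_quadForm_le (A + (α : ℂ) • (Uᴴ * A⁻¹ * U)) x
    rw [quad_split x, hx1, hUx] at hq
    have e2 : star z ⬝ᵥ (A⁻¹ *ᵥ z) = (((a i0)⁻¹ : ℝ) : ℂ) := by
      rw [hAinvz, dotProduct_smul, hz1, Complex.real_smul, mul_one]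
    rw [e2, Complex.add_re, ofReal_mul_re, Complex.ofReal_re] at hq
    simp only [Complex.one_re, mul_one] at hq
    linarith [hA_lb, hq]
  have key : ∀ i, a i + α * (a i)⁻¹ ≤ C := by
    intro i
    have hbi := hap i
    have hb0 := hap i0
    have hb1 := hap i1
    have hm := hi0 i
    have hM := hi1 i
    have hα0 : (0:ℝ) < α := lt_of_lt_of_le one_pos hα
    rw [show a i + α * (a i)⁻¹ = (a i * a i + α) / a i by field_simp, div_le_iff₀ hbi]
    have h1 : a i1 * a i1 + α ≤ C * a i1 := by
      have h := claimMax
      rw [show a i1 + α * (a i1)⁻¹ = (a i1 * a i1 + α) / a i1 by field_simp,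
        div_le_iff₀ hb1] at h
      exact h
    have h0 : a i0 * a i0 + α ≤ C * a i0 := by
      have h := claimMin
      rw [show a i0 + α * (a i0)⁻¹ = (a i0 * a i0 + α) / a i0 by field_simp,
        div_le_iff₀ hb0] at h
      exact h
    rcases le_or_gt α (a i * a i1) with hcase | hcase
    · nlinarith [mul_nonneg (sub_nonneg.mpr hM) (sub_nonneg.mpr hcase),
        mul_le_mul_of_nonneg_right h1 hbi.le, hb1]
    · have hbm : a i * a i0 ≤ a i * a i1 := by nlinarith [hi1 i0]
      have he2 : 0 ≤ (a i - a i0) * (α - a i * a i0) := by nlinarith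
      nlinarith [he2, mul_le_mul_of_nonneg_right h0 hbi.le, hb0]
  have hα0 : (0:ℝ) < α := lt_of_lt_of_le one_pos hα
  have hC0 : (0:ℝ) ≤ C := by
    have h := key i1
    nlinarith [hap i1, mul_pos hα0 (inv_pos.mpr (hap i1))]
  haveI : Invertible A := A.invertibleOfIsUnitDet hAdet
  apply opNorm_le_of_posSemidef hC0
  · have hrw : Matrix.fromBlocks A 1 1 ((α : ℂ) • A⁻¹)
        = Matrix.fromBlocks A 1 ((1 : Matrix (Fin n) (Fin n) ℂ)ᴴ) ((α : ℂ) • A⁻¹) := by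
      rw [Matrix.conjTranspose_one]
    rw [hrw, Matrix.PosDef.fromBlocks₁₁ _ _ hA]
    rw [Matrix.conjTranspose_one, one_mul, mul_one]
    rw [hAinv, phi_smul, phi_sub]
    exact phi_posSemidef fun i => by nlinarith [inv_pos.mpr (hap i)]
  · have hPphi : ((C : ℝ) : ℂ) • 1 - A = phi V (fun i => C - a i) := by
      conv_lhs => rw [← phi_const hV2 C, hAphi]
      rw [phi_sub]
    have hCa : ∀ i, 0 < C - a i := fun i => by
      nlinarith [key i, mul_pos hα0 (inv_pos.mpr (hap i))]
    have hPpd : (((C : ℝ) : ℂ) • 1 - A).PosDef := by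
      rw [hPphi]
      exact phi_posDef hV2 hCa
    haveI : Invertible (((C : ℝ) : ℂ) • 1 - A) :=
      Matrix.invertibleOfIsUnitDet _ ((Matrix.isUnit_iff_isUnit_det _).mp hPpd.isUnit)
    have hblock : ((C : ℝ) : ℂ) • 1 - Matrix.fromBlocks A 1 1 ((α : ℂ) • A⁻¹)
        = Matrix.fromBlocks (((C : ℝ) : ℂ) • 1 - A) (-1)
            ((-1 : Matrix (Fin n) (Fin n) ℂ)ᴴ) (((C : ℝ) : ℂ) • 1 - (α : ℂ) • A⁻¹) := by
      rw [← Matrix.fromBlocks_one, Matrix.fromBlocks_smul, sub_eq_add_neg,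
        Matrix.fromBlocks_neg, Matrix.fromBlocks_add]
      congr <;> simp [sub_eq_add_neg]
    rw [hblock, Matrix.PosDef.fromBlocks₁₁ _ _ hPpd]
    have hPinv : (((C : ℝ) : ℂ) • 1 - A)⁻¹ = phi V (fun i => (C - a i)⁻¹) := by
      rw [hPphi, phi_inv hV1 hV2 (fun i => (hCa i).ne')]
    have hQ : ((C : ℝ) : ℂ) • 1 - (α : ℂ) • A⁻¹ = phi V (fun i => C - α * (a i)⁻¹) := by
      conv_lhs => rw [← phi_const hV2 C, hAinv]
      rw [phi_smul, phi_sub]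
    simp only [Matrix.conjTranspose_neg, Matrix.conjTranspose_one, Matrix.neg_mul,
      Matrix.mul_neg, neg_neg, one_mul, mul_one]
    rw [hQ, hPinv, phi_sub]
    apply phi_posSemidef
    intro i
    have hb := hap i
    have hk := key i
    have h1 : 0 < C - a i := hCa i
    have h2 : α * (a i)⁻¹ ≤ C - a i := by linarith
    have h3 : a i ≤ C - α * (a i)⁻¹ := by
      have := mul_pos hα0 (inv_pos.mpr hb)
      linarith
    have h4 : (1:ℝ) ≤ (C - α * (a i)⁻¹) * (C - a i) := by
      have h5 : a i * (α * (a i)⁻¹) = α := by field_simp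
      calc (1:ℝ) ≤ α := hα
        _ = a i * (α * (a i)⁻¹) := h5.symm
        _ ≤ (C - α * (a i)⁻¹) * (C - a i) :=
            mul_le_mul h3 h2 (mul_pos hα0 (inv_pos.mpr hb)).le (by linarith)
    have h6 : (C - a i)⁻¹ ≤ C - α * (a i)⁻¹ := by
      rw [← one_div, div_le_iff₀ h1]
      linarith
    linarith
end

section
/- Let A be a positive definite n×n complex matrix and X an n×n complex matrix. Then the operator norm of the block matrix [[A, X], [X*, X* A⁻¹ X]] equals ||A + A^{-1/2} X X* A^{-1/2}||, where A^{-1/2} is the inverse of the positive square root of A. -/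
open scoped Matrix ComplexOrder

/-- The positive semidefinite square root of a positive semidefinite matrix
(the definition Mathlib had under this name in December 2024, since removed). -/
noncomputable def Matrix.PosSemidef.sqrt {n : Type*} [Fintype n] [DecidableEq n] {A : Matrix n n ℂ}
    (hA : A.PosSemidef) : Matrix n n ℂ :=
  hA.1.eigenvectorUnitary.1 * Matrix.diagonal ((↑) ∘ (√·) ∘ hA.1.eigenvalues) *
  (star hA.1.eigenvectorUnitary : Matrix n n ℂ)

theorem Matrix.PosSemidef.sqrt_conjTranspose_self {n : Type*} [Fintype n] [DecidableEq n]
    {A : Matrix n n ℂ} (hA : A.PosSemidef) : (hA.sqrt)ᴴ = hA.sqrt := by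
  unfold Matrix.PosSemidef.sqrt
  simp [Matrix.conjTranspose_mul, Matrix.diagonal_conjTranspose, Matrix.mul_assoc]
  have hf : star (((↑) ∘ (√·) ∘ hA.1.eigenvalues : n → ℂ)) = (↑) ∘ (√·) ∘ hA.1.eigenvalues := by
    funext i
    simp
  rw [hf, ← Matrix.star_eq_conjTranspose, ← Matrix.star_eq_conjTranspose, star_star]

theorem Matrix.PosSemidef.sqrt_mul_self' {n : Type*} [Fintype n] [DecidableEq n]
    {A : Matrix n n ℂ} (hA : A.PosSemidef) : hA.sqrt * hA.sqrt = A := by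
  unfold Matrix.PosSemidef.sqrt
  have hU : (star hA.1.eigenvectorUnitary : Matrix n n ℂ) * hA.1.eigenvectorUnitary.1 = 1 :=
    Matrix.UnitaryGroup.star_mul_self _
  have hD : Matrix.diagonal (((↑) ∘ (√·) ∘ hA.1.eigenvalues : n → ℂ)) *
      Matrix.diagonal ((↑) ∘ (√·) ∘ hA.1.eigenvalues) =
      Matrix.diagonal (RCLike.ofReal ∘ hA.1.eigenvalues) := by
    rw [Matrix.diagonal_mul_diagonal]
    congr 1
    funext i
    simp only [Function.comp_apply]
    rw [← Complex.ofReal_mul, Real.mul_self_sqrt (hA.eigenvalues_nonneg i)]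
    rfl
  conv_rhs => rw [hA.1.spectral_theorem]
  rw [Unitary.conjStarAlgAut_apply, ← hD]
  simp only [Matrix.mul_assoc]
  rw [← Matrix.mul_assoc (star _ : Matrix n n ℂ) hA.1.eigenvectorUnitary.1, hU, Matrix.one_mul]

open scoped Matrix.Norms.L2Operator in
theorem stmt_8 {n : ℕ} (A X : Matrix (Fin n) (Fin n) ℂ) (hA : A.PosDef) :
    opNorm (Matrix.fromBlocks A X Xᴴ (Xᴴ * A⁻¹ * X)) =
      opNorm (A + (hA.posSemidef.sqrt)⁻¹ * (X * Xᴴ) * (hA.posSemidef.sqrt)⁻¹) := by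
  set S := hA.posSemidef.sqrt with hSdef
  have hSH : Sᴴ = S := hA.posSemidef.sqrt_conjTranspose_self
  have hSS : S * S = A := hA.posSemidef.sqrt_mul_self'
  have hSdet : IsUnit S.det := by
    have : IsUnit (S.det * S.det) := by
      rw [← Matrix.det_mul, hSS]; exact hA.det_pos.ne'.isUnit
    exact isUnit_of_mul_isUnit_left this
  have hSinv : S * S⁻¹ = 1 := Matrix.mul_nonsing_inv S hSdet
  have hinvS : S⁻¹ * S = 1 := Matrix.nonsing_inv_mul S hSdet
  have hSinvH : (S⁻¹)ᴴ = S⁻¹ := by rw [Matrix.conjTranspose_nonsing_inv, hSH]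
  have hAinv : A⁻¹ = S⁻¹ * S⁻¹ := by rw [← hSS, Matrix.mul_inv_rev]
  set C : Matrix (Fin n) (Fin n ⊕ Fin n) ℂ := Matrix.fromCols S (S⁻¹ * X) with hC
  have hCH : Cᴴ = Matrix.fromRows Sᴴ (S⁻¹ * X)ᴴ :=
    Matrix.conjTranspose_fromCols_eq_fromRows_conjTranspose S (S⁻¹ * X)
  have h1 : Cᴴ * C = Matrix.fromBlocks A X Xᴴ (Xᴴ * A⁻¹ * X) := by
    have e2 : S * (S⁻¹ * X) = X := by rw [← Matrix.mul_assoc, hSinv, Matrix.one_mul]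
    have e3 : (S⁻¹ * X)ᴴ * S = Xᴴ := by
      rw [Matrix.conjTranspose_mul, hSinvH, Matrix.mul_assoc, hinvS, Matrix.mul_one]
    have e4 : (S⁻¹ * X)ᴴ * (S⁻¹ * X) = Xᴴ * A⁻¹ * X := by
      rw [Matrix.conjTranspose_mul, hSinvH, hAinv]
      simp [Matrix.mul_assoc]
    rw [hCH, hC, Matrix.fromRows_mul_fromCols, hSH, hSS, e2, e3, e4]
  have h2 : C * Cᴴ = A + S⁻¹ * (X * Xᴴ) * S⁻¹ := by
    rw [hCH, hC, Matrix.fromCols_mul_fromRows, hSH, hSS, Matrix.conjTranspose_mul, hSinvH]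
    simp [Matrix.mul_assoc]
  have key : opNorm (Cᴴ * C) = opNorm (C * Cᴴ) := by
    show ‖Cᴴ * C‖ = ‖C * Cᴴ‖
    calc ‖Cᴴ * C‖ = ‖C‖ * ‖C‖ := Matrix.l2_opNorm_conjTranspose_mul_self C
    _ = ‖Cᴴ‖ * ‖Cᴴ‖ := by rw [Matrix.l2_opNorm_conjTranspose]
    _ = ‖Cᴴᴴ * Cᴴ‖ := (Matrix.l2_opNorm_conjTranspose_mul_self Cᴴ).symm
    _ = ‖C * Cᴴ‖ := by rw [Matrix.conjTranspose_conjTranspose]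
  rw [← h1, ← h2, key]
end

section
/- Let A = diag(1, 2, 3), C = diag(1, 1/2, 2), and let U be the 3×3 permutation (unitary) matrix with U e₁ = e₃, U e₂ = e₁, U e₃ = e₂ (i.e., rows (0,1,0), (0,0,1), (1,0,0)). Then A⁻¹ ≤ C, A and C commute, ||A + U* C U|| = 7/2, and the operator norm of the 6×6 block matrix [[A, I], [I, C]] is at least (5 + √5)/2, which is strictly greater than 7/2. Hence ||[[A, I], [I, C]]|| > ||A + U* C U||. -/
open scoped Matrix ComplexOrder

lemma toEuclideanCLM_apply' {n : Type*} [Fintype n] [DecidableEq n] (M : Matrix n n ℂ)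
    (x : EuclideanSpace ℂ n) :
    Matrix.toEuclideanCLM (𝕜 := ℂ) M x = (WithLp.equiv 2 _).symm (M *ᵥ (WithLp.equiv 2 _ x)) := by
  conv_lhs => rw [← (WithLp.equiv 2 _).symm_apply_apply x]
  exact Matrix.toEuclideanCLM_toLp M _

lemma opNorm_ge_of_eigen {n : Type*} [Fintype n] [DecidableEq n] (M : Matrix n n ℂ)
    (x : n → ℂ) (c : ℝ) (hc : 0 ≤ c) (hx : x ≠ 0) (h : M *ᵥ x = (c : ℂ) • x) :
    c ≤ opNorm M := by
  set y : EuclideanSpace ℂ n := (WithLp.equiv 2 _).symm x with hy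
  have hy0 : ‖y‖ ≠ 0 := by
    simp only [norm_ne_zero_iff]
    simpa [hy] using hx
  have hMy : Matrix.toEuclideanCLM (𝕜 := ℂ) M y = (c : ℂ) • y := by
    rw [toEuclideanCLM_apply']
    simp [hy, h]
  have := (Matrix.toEuclideanCLM (𝕜 := ℂ) M).le_opNorm y
  rw [hMy, norm_smul, Complex.norm_real, Real.norm_of_nonneg hc] at this
  exact le_of_mul_le_mul_right this (lt_of_le_of_ne (norm_nonneg y) (Ne.symm hy0))

lemma opNorm_diagonal_le {n : Type*} [Fintype n] [DecidableEq n] (d : n → ℂ) (c : ℝ)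
    (hc : 0 ≤ c) (h : ∀ i, ‖d i‖ ≤ c) : opNorm (Matrix.diagonal d) ≤ c := by
  apply ContinuousLinearMap.opNorm_le_bound _ hc
  intro x
  rw [toEuclideanCLM_apply', EuclideanSpace.norm_eq, EuclideanSpace.norm_eq]
  have key : ∀ i, ‖(WithLp.equiv 2 (n → ℂ)).symm (Matrix.diagonal d *ᵥ (WithLp.equiv 2 _ x)) i‖ ^ 2
      ≤ c ^ 2 * ‖x i‖ ^ 2 := by
    intro i
    have : (WithLp.equiv 2 (n → ℂ)).symm (Matrix.diagonal d *ᵥ (WithLp.equiv 2 _ x)) i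
        = d i * x i := by simp [Matrix.mulVec_diagonal]
    rw [this, norm_mul, mul_pow]
    exact mul_le_mul_of_nonneg_right (pow_le_pow_left₀ (norm_nonneg _) (h i) 2) (by positivity)
  calc Real.sqrt (∑ i, ‖(WithLp.equiv 2 (n → ℂ)).symm
          (Matrix.diagonal d *ᵥ (WithLp.equiv 2 _ x)) i‖ ^ 2)
      ≤ Real.sqrt (∑ i, c ^ 2 * ‖x i‖ ^ 2) :=
        Real.sqrt_le_sqrt (Finset.sum_le_sum fun i _ => key i)
    _ = c * Real.sqrt (∑ i, ‖x i‖ ^ 2) := by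
        rw [← Finset.mul_sum, Real.sqrt_mul (by positivity), Real.sqrt_sq hc]

theorem stmt_11 :
    let A : Matrix (Fin 3) (Fin 3) ℂ := Matrix.diagonal ![1, 2, 3]
    let C : Matrix (Fin 3) (Fin 3) ℂ := Matrix.diagonal ![1, 1/2, 2]
    let U : Matrix (Fin 3) (Fin 3) ℂ := !![0, 1, 0; 0, 0, 1; 1, 0, 0]
    (C - A⁻¹).PosSemidef ∧ A * C = C * A ∧
      opNorm (A + Uᴴ * C * U) = 7 / 2 ∧
      opNorm (Matrix.fromBlocks A 1 1 C) ≥ (5 + Real.sqrt 5) / 2 ∧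
      (5 + Real.sqrt 5) / 2 > 7 / 2 ∧
      opNorm (Matrix.fromBlocks A 1 1 C) > opNorm (A + Uᴴ * C * U) := by
  intro A C U
  have hs : Real.sqrt 5 ^ 2 = 5 := Real.sq_sqrt (by norm_num)
  have hs0 : (0:ℝ) ≤ Real.sqrt 5 := Real.sqrt_nonneg 5
  have hs2 : (2:ℝ) < Real.sqrt 5 := by nlinarith
  -- A + Uᴴ C U is diagonal
  have hACU : A + Uᴴ * C * U = Matrix.diagonal ![3, 3, (7:ℂ)/2] := by
    show Matrix.diagonal ![1, 2, 3] + (!![0, 1, 0; 0, 0, 1; 1, 0, 0] : Matrix (Fin 3) (Fin 3) ℂ)ᴴ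
        * Matrix.diagonal ![1, 1/2, 2] * !![0, 1, 0; 0, 0, 1; 1, 0, 0] = _
    ext i j
    fin_cases i <;> fin_cases j <;>
      simp [Matrix.mul_apply, Fin.sum_univ_three, Matrix.diagonal_apply,
        Matrix.conjTranspose_apply, Matrix.vecHead, Matrix.vecTail] <;> norm_num
  -- norm of A + Uᴴ C U
  have h3 : opNorm (A + Uᴴ * C * U) = 7 / 2 := by
    rw [hACU]
    have h0 : ‖(3:ℂ)‖ ≤ 7/2 := by norm_num
    have h2 : ‖((7:ℂ)/2)‖ ≤ 7/2 := by
      rw [show ((7:ℂ)/2) = ((7/2:ℝ):ℂ) by norm_num, Complex.norm_real]; norm_num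
    refine le_antisymm (opNorm_diagonal_le _ _ (by norm_num) ?_) ?_
    · intro i
      fin_cases i
      · exact h0
      · exact h0
      · exact h2
    · refine opNorm_ge_of_eigen _ (Pi.single 2 1) (7/2) (by norm_num) ?_ ?_
      · intro h
        have := congrFun h 2
        simp [Pi.single_apply] at this
      · funext i
        fin_cases i <;> simp [Matrix.mulVec_diagonal, Pi.single_apply] <;> norm_num
  -- lower bound on block matrix
  have hblk : opNorm (Matrix.fromBlocks A 1 1 C) ≥ (5 + Real.sqrt 5) / 2 := by
    set t : ℝ := (Real.sqrt 5 - 1) / 2 with ht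
    set lam : ℝ := (5 + Real.sqrt 5) / 2 with hlam
    have key1 : ((lam:ℂ)) = 3 + (t:ℂ) := by
      have : lam = 3 + t := by rw [hlam, ht]; ring
      rw [this]; push_cast; ring
    have key2 : (lam:ℂ) * (t:ℂ) = 1 + 2 * (t:ℂ) := by
      have h : lam * t = 1 + 2 * t := by rw [hlam, ht]; nlinarith
      calc (lam:ℂ) * (t:ℂ) = ((lam * t : ℝ) : ℂ) := by push_cast; ring
        _ = ((1 + 2*t : ℝ) : ℂ) := by rw [h]
        _ = 1 + 2 * (t:ℂ) := by push_cast; ring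
    refine opNorm_ge_of_eigen _ (Sum.elim (Pi.single 2 1) (Pi.single 2 ((t:ℝ):ℂ))) lam
      (by positivity) ?_ ?_
    · intro h
      have := congrFun h (Sum.inl 2)
      simp [Pi.single_apply] at this
    · show (Matrix.fromBlocks (Matrix.diagonal ![1,2,3]) 1 1 (Matrix.diagonal ![1,1/2,2])
          : Matrix (Fin 3 ⊕ Fin 3) (Fin 3 ⊕ Fin 3) ℂ) *ᵥ _ = _
      rw [Matrix.fromBlocks_mulVec]
      funext i
      rcases i with i | i <;> fin_cases i <;>
        simp [Matrix.mulVec_diagonal, Matrix.one_mulVec, Pi.single_apply] <;>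
        first
        | linear_combination -key1
        | linear_combination key1
        | linear_combination -key1 - key2
        | linear_combination key1 + key2
        | linear_combination key2
        | linear_combination -key2
  have hgt : (5 + Real.sqrt 5) / 2 > 7 / 2 := by nlinarith
  refine ⟨?_, ?_, h3, hblk, hgt, by rw [h3]; linarith⟩
  · have hAinv : A⁻¹ = Matrix.diagonal ![1, 1/2, 1/3] := by
      apply Matrix.inv_eq_right_inv
      show Matrix.diagonal ![1, 2, 3] * Matrix.diagonal ![1, 1/2, 1/3] = 1
      ext i j
      fin_cases i <;> fin_cases j <;>
        simp [Matrix.mul_apply, Fin.sum_univ_three, Matrix.diagonal_apply, Matrix.one_apply]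
    rw [hAinv]
    show ((Matrix.diagonal ![1, 1/2, 2] : Matrix (Fin 3) (Fin 3) ℂ) - Matrix.diagonal ![1, 1/2, 1/3]).PosSemidef
    rw [Matrix.diagonal_sub]
    refine Matrix.posSemidef_diagonal_iff.mpr fun i => ?_
    fin_cases i <;>
      · simp only [Pi.sub_apply]
        norm_num [Complex.le_def]
  · show Matrix.diagonal ![1, 2, 3] * Matrix.diagonal ![1, 1/2, 2]
        = Matrix.diagonal ![1, 1/2, 2] * Matrix.diagonal ![1, 2, 3]
    rw [Matrix.diagonal_mul_diagonal, Matrix.diagonal_mul_diagonal]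
    exact congrArg _ (by funext i; ring)
end

section
/- Let D be a positive semidefinite n×n complex matrix and U a unitary n×n matrix. Assume that for every positive definite n×n matrix A and every Hermitian n×n matrix C with C ≥ D A⁻¹ D, the operator norm of the block matrix [[A, D], [D, C]] is at most ||A + U* C U||. Then ||D + U* D U|| = 2 ||D||. -/
open scoped Matrix ComplexOrder

open scoped Matrix.Norms.L2Operator MatrixOrder

lemma opNorm_eq_norm {m : Type*} [Fintype m] [DecidableEq m] (M : Matrix m m ℂ) :
    opNorm M = ‖M‖ := rfl

lemma norm_one_le_aux {m : Type*} [Fintype m] [DecidableEq m] :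
    ‖(1 : Matrix m m ℂ)‖ ≤ 1 := by
  rw [Matrix.cstar_norm_def, map_one, ContinuousLinearMap.one_def]
  exact ContinuousLinearMap.norm_id_le

lemma norm_unitary_le_aux {m : Type*} [Fintype m] [DecidableEq m] (V : Matrix m m ℂ)
    (hV : Vᴴ * V = 1) : ‖V‖ ≤ 1 := by
  have h2 : ‖V‖ * ‖V‖ = ‖Vᴴ * V‖ := (Matrix.l2_opNorm_conjTranspose_mul_self V).symm
  rw [hV] at h2
  nlinarith [norm_nonneg V, norm_one_le_aux (m := m)]

lemma norm_diagonal_le_aux {m : Type*} [Fintype m] [DecidableEq m] (d : m → ℂ) (c : ℝ)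
    (hc : 0 ≤ c) (hd : ∀ i, ‖d i‖ ≤ c) : ‖(Matrix.diagonal d : Matrix m m ℂ)‖ ≤ c := by
  rw [Matrix.cstar_norm_def]
  refine ContinuousLinearMap.opNorm_le_bound _ hc fun x => ?_
  have hy : ∀ i, (Matrix.toEuclideanCLM (𝕜 := ℂ) (Matrix.diagonal d) x) i = d i * x i := by
    intro i
    show (Matrix.diagonal d *ᵥ (WithLp.equiv 2 _ x)) i = _
    rw [Matrix.mulVec_diagonal]
    rfl
  rw [EuclideanSpace.norm_eq, EuclideanSpace.norm_eq]
  calc Real.sqrt (∑ i, ‖(Matrix.toEuclideanCLM (𝕜 := ℂ) (Matrix.diagonal d) x) i‖ ^ 2)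
      ≤ Real.sqrt (c ^ 2 * ∑ i, ‖x i‖ ^ 2) := by
        refine Real.sqrt_le_sqrt ?_
        rw [Finset.mul_sum]
        refine Finset.sum_le_sum fun i _ => ?_
        rw [hy i, norm_mul, mul_pow]
        exact mul_le_mul_of_nonneg_right
          (pow_le_pow_left₀ (norm_nonneg _) (hd i) 2) (sq_nonneg _)
    _ = c * Real.sqrt (∑ i, ‖x i‖ ^ 2) := by
        rw [Real.sqrt_mul (sq_nonneg c), Real.sqrt_sq hc]

lemma posSemidef_real_smul_aux {m : Type*} [Fintype m] {P : Matrix m m ℂ}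
    (hP : P.PosSemidef) {ε : ℝ} (hε : 0 ≤ ε) : ((ε : ℂ) • P).PosSemidef := by
  refine ⟨?_, fun x => ?_⟩
  · have := hP.1
    simp only [Matrix.IsHermitian, Matrix.conjTranspose_smul, Complex.star_def,
      Complex.conj_ofReal, this.eq]
  · have h0 : (0 : ℂ) ≤ (ε : ℂ) := by
      rw [Complex.le_def]
      simp [hε]
    exact (hP.smul h0).2 x

theorem stmt_13 {n : ℕ} (D U : Matrix (Fin n) (Fin n) ℂ)
    (hD : D.PosSemidef) (hU : Uᴴ * U = 1)
    (h : ∀ A C : Matrix (Fin n) (Fin n) ℂ, A.PosDef → C.IsHermitian →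
      (C - D * A⁻¹ * D).PosSemidef →
      opNorm (Matrix.fromBlocks A D D C) ≤ opNorm (A + Uᴴ * C * U)) :
    opNorm (D + Uᴴ * D * U) = 2 * opNorm D := by
  rcases Nat.eq_zero_or_pos n with hn | hn
  · subst hn
    have hD0 : D = 0 := Subsingleton.elim _ _
    have hz : opNorm (0 : Matrix (Fin 0) (Fin 0) ℂ) = 0 := by
      rw [opNorm, map_zero, norm_zero]
    rw [hD0]
    simp only [Matrix.mul_zero, Matrix.zero_mul, add_zero, hz]
    ring
  haveI : Nonempty (Fin n) := Fin.pos_iff_nonempty.mp hn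
  -- notation
  simp only [opNorm_eq_norm] at h ⊢
  set m : ℝ := ‖D + Uᴴ * D * U‖ with hm_def
  -- max eigenvalue
  obtain ⟨i₀, -, hi₀⟩ := Finset.exists_max_image Finset.univ hD.1.eigenvalues
    ⟨Classical.arbitrary _, Finset.mem_univ _⟩
  set lam : ℝ := hD.1.eigenvalues i₀ with hlam_def
  have hlam0 : 0 ≤ lam := hD.eigenvalues_nonneg i₀
  -- ‖D‖ ≤ lam via the spectral theorem
  have hDlam : ‖D‖ ≤ lam := by
    set W : Matrix (Fin n) (Fin n) ℂ := (hD.1.eigenvectorUnitary : Matrix (Fin n) (Fin n) ℂ)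
      with hW_def
    have hWu : Wᴴ * W = 1 := by
      have := hD.1.eigenvectorUnitary.2
      rw [Matrix.mem_unitaryGroup_iff'] at this
      simpa [Matrix.star_eq_conjTranspose] using this
    have hWn : ‖W‖ ≤ 1 := norm_unitary_le_aux W hWu
    have hWHn : ‖Wᴴ‖ ≤ 1 := by rw [Matrix.l2_opNorm_conjTranspose]; exact hWn
    have hdiag : ‖(Matrix.diagonal (RCLike.ofReal ∘ hD.1.eigenvalues) :
        Matrix (Fin n) (Fin n) ℂ)‖ ≤ lam := by
      refine norm_diagonal_le_aux _ lam hlam0 fun i => ?_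
      simp only [Function.comp_apply, RCLike.norm_ofReal,
        abs_of_nonneg (hD.eigenvalues_nonneg i)]
      exact hi₀ i (Finset.mem_univ i)
    calc ‖D‖ = ‖W * Matrix.diagonal (RCLike.ofReal ∘ hD.1.eigenvalues) * Wᴴ‖ := by
          conv_lhs => rw [hD.1.spectral_theorem]
          rw [Unitary.conjStarAlgAut_apply, Matrix.star_eq_conjTranspose]
      _ ≤ ‖W * Matrix.diagonal (RCLike.ofReal ∘ hD.1.eigenvalues)‖ * ‖Wᴴ‖ :=
          Matrix.l2_opNorm_mul _ _
      _ ≤ (‖W‖ * ‖(Matrix.diagonal (RCLike.ofReal ∘ hD.1.eigenvalues) :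
            Matrix (Fin n) (Fin n) ℂ)‖) * ‖Wᴴ‖ := by
          refine mul_le_mul_of_nonneg_right (Matrix.l2_opNorm_mul _ _) (norm_nonneg _)
      _ ≤ lam := by
          have hd0 := norm_nonneg (Matrix.diagonal (RCLike.ofReal ∘ hD.1.eigenvalues) :
            Matrix (Fin n) (Fin n) ℂ)
          have e1 : ‖W‖ * ‖(Matrix.diagonal (RCLike.ofReal ∘ hD.1.eigenvalues) :
              Matrix (Fin n) (Fin n) ℂ)‖ ≤ lam := by nlinarith [norm_nonneg W]
          nlinarith [norm_nonneg Wᴴ, mul_nonneg (norm_nonneg W) hd0]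
  -- upper bound : m ≤ 2‖D‖
  have hUn : ‖U‖ ≤ 1 := norm_unitary_le_aux U hU
  have hUHn : ‖Uᴴ‖ ≤ 1 := by rw [Matrix.l2_opNorm_conjTranspose]; exact hUn
  have hmu : m ≤ 2 * ‖D‖ := by
    have h1 : m ≤ ‖D‖ + ‖Uᴴ * D * U‖ := norm_add_le _ _
    have h2 : ‖Uᴴ * D * U‖ ≤ ‖Uᴴ * D‖ * ‖U‖ := Matrix.l2_opNorm_mul _ _
    have h3 : ‖Uᴴ * D‖ ≤ ‖Uᴴ‖ * ‖D‖ := Matrix.l2_opNorm_mul _ _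
    nlinarith [norm_nonneg (Uᴴ * D), norm_nonneg D, norm_nonneg (Uᴴ * D * U)]
  -- lower bound : 2 * lam ≤ m
  have hlow : ∀ ε : ℝ, 0 < ε → 4 * lam ≤ 2 * m + 2 * ε := by
    intro ε hε
    set B : Matrix (Fin n) (Fin n) ℂ := (ε : ℂ) • 1 + D with hB_def
    have hεC : (0 : ℂ) < (ε : ℂ) := by
      rw [Complex.lt_def]; simp [hε]
    have hB : B.PosDef := by
      have h1 : ((ε : ℂ) • (1 : Matrix (Fin n) (Fin n) ℂ)).PosDef := by
        rw [Matrix.smul_one_eq_diagonal]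
        exact Matrix.posDef_diagonal_iff.mpr fun _ => hεC
      exact h1.add_posSemidef hD
    have hBdet : IsUnit B.det := hB.isUnit.map (Matrix.detMonoidHom)
    -- the square root of D
    set S : Matrix (Fin n) (Fin n) ℂ := CFC.sqrt D with hS_def
    have hSS : S * S = D := CFC.sqrt_mul_sqrt_self D hD.nonneg
    have hSH : Sᴴ = S := (Matrix.nonneg_iff_posSemidef.mp (CFC.sqrt_nonneg D)).1
    have hSB : S * B = B * S := by
      rw [hB_def, ← hSS]
      simp only [Matrix.mul_add, Matrix.add_mul, Matrix.mul_smul, Matrix.smul_mul,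
        Matrix.mul_one, Matrix.one_mul, Matrix.mul_assoc]
    have hSBinv : S * B⁻¹ = B⁻¹ * S := by
      have key : B * (S * B⁻¹) = S := by
        rw [← Matrix.mul_assoc, ← hSB, Matrix.mul_assoc,
          Matrix.mul_nonsing_inv B hBdet, Matrix.mul_one]
      calc S * B⁻¹ = (B⁻¹ * B) * (S * B⁻¹) := by
            rw [Matrix.nonsing_inv_mul B hBdet, Matrix.one_mul]
        _ = B⁻¹ * (B * (S * B⁻¹)) := by rw [Matrix.mul_assoc]
        _ = B⁻¹ * S := by rw [key]
    have hDBinv : D * B⁻¹ = B⁻¹ * D := by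
      rw [← hSS, Matrix.mul_assoc, hSBinv, ← Matrix.mul_assoc, hSBinv, Matrix.mul_assoc]
    have hSchur : (D - D * B⁻¹ * D).PosSemidef := by
      have key : D - D * B⁻¹ * D = (ε : ℂ) • (S * B⁻¹ * Sᴴ) := by
        rw [hSH]
        have h1 : S * B⁻¹ * S = B⁻¹ * D := by
          rw [hSBinv, Matrix.mul_assoc, hSS]
        rw [h1]
        have h2 : D - D * B⁻¹ * D = (1 - D * B⁻¹) * D := by
          rw [Matrix.sub_mul, Matrix.one_mul]
        rw [h2]
        have h3 : (1 : Matrix (Fin n) (Fin n) ℂ) - D * B⁻¹ = ((ε : ℂ) • 1) * B⁻¹ := by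
          have h4 : ((ε : ℂ) • 1 : Matrix (Fin n) (Fin n) ℂ) = B - D := by
            rw [hB_def, add_sub_cancel_right]
          rw [h4, Matrix.sub_mul, Matrix.mul_nonsing_inv B hBdet]
        rw [h3, Matrix.smul_mul, Matrix.smul_mul, Matrix.one_mul]
      rw [key]
      exact posSemidef_real_smul_aux
        (hB.inv.posSemidef.mul_mul_conjTranspose_same S) hε.le
    have hh := h B D hB hD.1 hSchur
    -- RHS bound
    have hRHS : ‖B + Uᴴ * D * U‖ ≤ ε + m := by
      have h1 : B + Uᴴ * D * U = (ε : ℂ) • 1 + (D + Uᴴ * D * U) := by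
        rw [hB_def, add_assoc]
      rw [h1]
      have h2 : ‖((ε : ℂ) • 1 : Matrix (Fin n) (Fin n) ℂ)‖ ≤ ε := by
        rw [norm_smul]
        have he : ‖((ε : ℝ) : ℂ)‖ = ε := by
          simp [abs_of_nonneg hε.le]
        rw [he]
        nlinarith [norm_one_le_aux (m := Fin n), norm_nonneg (1 : Matrix (Fin n) (Fin n) ℂ)]
      calc ‖(ε : ℂ) • 1 + (D + Uᴴ * D * U)‖
          ≤ ‖((ε : ℂ) • 1 : Matrix (Fin n) (Fin n) ℂ)‖ + m := norm_add_le _ _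
        _ ≤ ε + m := by linarith
    -- LHS bound via the Rayleigh quotient at the top eigenvector
    set v : Fin n → ℂ := ⇑(hD.1.eigenvectorBasis i₀) with hv_def
    have hv1 : star v ⬝ᵥ v = 1 := by
      have h1 : (@inner ℂ _ _ (hD.1.eigenvectorBasis i₀) (hD.1.eigenvectorBasis i₀)) = 1 := by
        rw [@inner_self_eq_norm_sq_to_K ℂ]
        rw [hD.1.eigenvectorBasis.orthonormal.1 i₀]
        norm_num
      rw [dotProduct_comm]
      rw [EuclideanSpace.inner_eq_star_dotProduct] at h1
      exact h1
    have hvD : D *ᵥ v = (lam : ℂ) • v := by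
      have h1 := hD.1.mulVec_eigenvectorBasis i₀
      rw [← hlam_def] at h1
      rw [h1]
      funext j
      simp only [Pi.smul_apply, Complex.real_smul, smul_eq_mul]
      rfl
    have hvB : B *ᵥ v = ((ε : ℂ) + lam) • v := by
      rw [hB_def, Matrix.add_mulVec, Matrix.smul_mulVec, Matrix.one_mulVec, hvD,
        add_smul]
    set w : EuclideanSpace ℂ (Fin n ⊕ Fin n) :=
      (WithLp.equiv 2 ((Fin n ⊕ Fin n) → ℂ)).symm (Sum.elim v v) with hw_def
    set T := Matrix.toEuclideanCLM (𝕜 := ℂ) (Matrix.fromBlocks B D D D) with hT_def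
    have hstar : star (Sum.elim v v) = Sum.elim (star v) (star v) := by
      funext x; cases x <;> rfl
    have hinner : (@inner ℂ _ _ w (T w)) = (ε : ℂ) + 4 * lam := by
      have hv1' : v ⬝ᵥ star v = 1 := by rw [dotProduct_comm]; exact hv1
      rw [hw_def, hT_def, WithLp.equiv_symm_apply, Matrix.toEuclideanCLM_toLp,
        EuclideanSpace.inner_toLp_toLp, Matrix.fromBlocks_mulVec]
      simp only [hstar, Sum.elim_comp_inl, Sum.elim_comp_inr,
        sumElim_dotProduct_sumElim, hvD, hvB, dotProduct_add,
        dotProduct_smul, hv1, smul_eq_mul, mul_one, add_dotProduct, smul_dotProduct, hv1']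
      ring
    have hwnorm : ‖w‖ ^ 2 = 2 := by
      have h1 : (@inner ℂ _ _ w w) = 2 := by
        rw [hw_def, WithLp.equiv_symm_apply, EuclideanSpace.inner_toLp_toLp, hstar,
          sumElim_dotProduct_sumElim, dotProduct_comm, hv1]
        norm_num
      have h2 : (@inner ℂ _ _ w w) = (‖w‖ : ℂ) ^ 2 := by
        rw [@inner_self_eq_norm_sq_to_K ℂ]; norm_cast
      rw [h2] at h1
      exact_mod_cast h1
    have hLHS : ε + 4 * lam ≤ 2 * ‖Matrix.fromBlocks B D D D‖ := by
      have h1 : ε + 4 * lam = (@inner ℂ _ _ w (T w)).re := by rw [hinner]; simp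
      have h2 : (@inner ℂ _ _ w (T w)).re ≤ ‖(@inner ℂ _ _ w (T w))‖ := by
        exact Complex.re_le_norm _
      have h3 : ‖(@inner ℂ _ _ w (T w))‖ ≤ ‖w‖ * ‖T w‖ := norm_inner_le_norm _ _
      have h4 : ‖T w‖ ≤ ‖T‖ * ‖w‖ := T.le_opNorm w
      have h5 : ‖T‖ = ‖Matrix.fromBlocks B D D D‖ := rfl
      nlinarith [norm_nonneg w, norm_nonneg (T w), norm_nonneg T]
    linarith [hh, hRHS, hLHS]
  have h2lam : 4 * lam ≤ 2 * m := by
    refine le_of_forall_pos_le_add fun ε hε => ?_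
    have := hlow (ε / 2) (by linarith)
    linarith
  linarith
end

section
/- Let A and B be positive semidefinite n×n complex matrices with ||A + B|| = ||A|| + ||B||. Then for all real numbers α ≥ 0 and β ≥ 0 one has ||α A + β B|| = α ||A|| + β ||B||. -/
open scoped Matrix ComplexOrder

open ContinuousLinearMap RCLike

set_option maxHeartbeats 1000000
set_option synthInstance.maxHeartbeats 400000

local notation "⟪" x ", " y "⟫" => @inner ℂ _ _ x y

lemma re_inner_le_norm' {n : ℕ} (T : EuclideanSpace ℂ (Fin n) →L[ℂ] EuclideanSpace ℂ (Fin n))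
    (x : EuclideanSpace ℂ (Fin n)) (hx : ‖x‖ ≤ 1) : re ⟪T x, x⟫ ≤ ‖T‖ := by
  calc re ⟪T x, x⟫ ≤ ‖(⟪T x, x⟫ : ℂ)‖ := re_le_norm _
    _ ≤ ‖T x‖ * ‖x‖ := norm_inner_le_norm _ _
    _ ≤ (‖T‖ * ‖x‖) * ‖x‖ := by
        have := T.le_opNorm x
        nlinarith [norm_nonneg (T x), norm_nonneg x, norm_nonneg T]
    _ ≤ ‖T‖ := by
        have hx2 : ‖x‖ * ‖x‖ ≤ 1 := mul_le_one₀ hx (norm_nonneg x) hx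
        nlinarith [norm_nonneg T]

lemma key {n : ℕ} (T : EuclideanSpace ℂ (Fin n) →L[ℂ] EuclideanSpace ℂ (Fin n))
    (hT : T.IsPositive) :
    ∃ x : EuclideanSpace ℂ (Fin n), ‖x‖ ≤ 1 ∧ re ⟪T x, x⟫ = ‖T‖ := by
  rcases Nat.eq_zero_or_pos n with hn | hn
  · subst hn
    refine ⟨0, by simp, ?_⟩
    haveI : Subsingleton (EuclideanSpace ℂ (Fin 0)) :=
      ⟨fun a b => by ext i; exact Fin.elim0 i⟩
    have : T = 0 := ContinuousLinearMap.ext fun x => Subsingleton.elim _ _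
    simp [this]
  · have : Nonempty (Fin n) := ⟨⟨0, hn⟩⟩
    have : Nontrivial (EuclideanSpace ℂ (Fin n)) := by
      infer_instance
    obtain ⟨x₀, hx₀s, hmax⟩ := (isCompact_sphere (0 : EuclideanSpace ℂ (Fin n)) 1).exists_isMaxOn
      (NormedSpace.sphere_nonempty.mpr zero_le_one) (T.reApplyInnerSelf_continuous.continuousOn)
    have hx₀ : ‖x₀‖ = 1 := by simpa using mem_sphere_zero_iff_norm.mp hx₀s
    set μ := T.reApplyInnerSelf x₀ with hμ
    have hμ0 : 0 ≤ μ := hT.2 x₀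
    have claim1 : ∀ y : EuclideanSpace ℂ (Fin n), re ⟪T y, y⟫ ≤ μ * ‖y‖ ^ 2 := by
      intro y
      rcases eq_or_ne y 0 with rfl | hy
      · simp
      · have hyn : (0:ℝ) < ‖y‖ := norm_pos_iff.mpr hy
        set c : ℝ := ‖y‖⁻¹ with hc
        have hcpos : 0 < c := by positivity
        set z : EuclideanSpace ℂ (Fin n) := (c : ℂ) • y with hz
        have hzs : z ∈ Metric.sphere (0 : EuclideanSpace ℂ (Fin n)) 1 := by
          simp only [mem_sphere_zero_iff_norm, hz, norm_smul, Complex.norm_real]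
          rw [Real.norm_eq_abs, abs_of_pos hcpos, hc, inv_mul_cancel₀ (ne_of_gt hyn)]
        have hle : T.reApplyInnerSelf z ≤ μ := hmax hzs
        have hmul : ((c:ℂ)) * ((c:ℂ) * ⟪T y, y⟫) = ((c^2 : ℝ) : ℂ) * ⟪T y, y⟫ := by
          push_cast; ring
        have hcalc : T.reApplyInnerSelf z = c ^ 2 * re ⟪T y, y⟫ := by
          rw [reApplyInnerSelf, hz, map_smul, inner_smul_left, inner_smul_right,
            Complex.conj_ofReal, hmul]
          exact Complex.re_ofReal_mul _ _
        rw [hcalc] at hle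
        have hcsq : c ^ 2 = (‖y‖ ^ 2)⁻¹ := by rw [hc, inv_pow]
        rw [hcsq] at hle
        have hy2 : (0:ℝ) < ‖y‖ ^ 2 := by positivity
        calc re ⟪T y, y⟫ = ((‖y‖^2)⁻¹ * re ⟪T y, y⟫) * ‖y‖^2 := by field_simp
          _ ≤ μ * ‖y‖ ^ 2 := by nlinarith
    have hTle : ‖T‖ ≤ μ := by
      have hle : T ≤ (μ : ℂ) • (1 : EuclideanSpace ℂ (Fin n) →L[ℂ] EuclideanSpace ℂ (Fin n)) := by
        rw [le_def]
        constructor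
        · have h1 : IsSelfAdjoint ((μ : ℂ) • (1 : EuclideanSpace ℂ (Fin n) →L[ℂ] EuclideanSpace ℂ (Fin n))) := by
            rw [IsSelfAdjoint, star_smul, star_one, Complex.star_def, Complex.conj_ofReal]
          exact (h1.sub hT.isSelfAdjoint).isSymmetric
        · intro y
          have happ : ((μ:ℂ) • (1 : EuclideanSpace ℂ (Fin n) →L[ℂ] EuclideanSpace ℂ (Fin n)) - T) y
              = (μ:ℂ) • y - T y := by simp
          rw [reApplyInnerSelf, happ, inner_sub_left, map_sub, inner_smul_left,
            Complex.conj_ofReal]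
          have h2 : re ((μ:ℂ) * ⟪y, y⟫) = μ * ‖y‖ ^ 2 := by
            exact (Complex.re_ofReal_mul μ _).trans
              (congrArg (μ * ·) (inner_self_eq_norm_sq (𝕜 := ℂ) y))
          rw [h2]
          have := claim1 y
          linarith
      have h0T : (0 : EuclideanSpace ℂ (Fin n) →L[ℂ] EuclideanSpace ℂ (Fin n)) ≤ T :=
        (nonneg_iff_isPositive T).mpr hT
      calc ‖T‖ ≤ ‖(μ : ℂ) • (1 : EuclideanSpace ℂ (Fin n) →L[ℂ] EuclideanSpace ℂ (Fin n))‖ :=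
            CStarAlgebra.norm_le_norm_of_nonneg_of_le h0T hle
        _ = μ := by
            rw [norm_smul ((μ:ℂ)) (1 : EuclideanSpace ℂ (Fin n) →L[ℂ] EuclideanSpace ℂ (Fin n)),
              norm_one, Complex.norm_real, Real.norm_eq_abs, abs_of_nonneg hμ0, mul_one]
    have hμle : μ ≤ ‖T‖ := by
      have := re_inner_le_norm' T x₀ (le_of_eq hx₀)
      rw [hμ, reApplyInnerSelf]
      exact this
    exact ⟨x₀, le_of_eq hx₀, by rw [← reApplyInnerSelf, ← hμ]; linarith⟩

open scoped Matrix ComplexOrder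

lemma pos_of_psd {n : ℕ} {M : Matrix (Fin n) (Fin n) ℂ} (hM : M.PosSemidef) :
    (Matrix.toEuclideanCLM (𝕜 := ℂ) M).IsPositive := by
  constructor
  · have hsa : IsSelfAdjoint (Matrix.toEuclideanCLM (𝕜 := ℂ) M) := by
      rw [IsSelfAdjoint, ← map_star]
      congr 1
      exact hM.1
    exact hsa.isSymmetric
  · intro x
    rw [reApplyInnerSelf, inner_re_symm]
    set y : Fin n → ℂ := (WithLp.equiv 2 (Fin n → ℂ)) x with hy
    have hx : x = (WithLp.equiv 2 (Fin n → ℂ)).symm y := rfl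
    have h0 := hM.dotProduct_mulVec_nonneg y
    have hre : re ⟪x, Matrix.toEuclideanCLM (𝕜 := ℂ) M x⟫ = re (star y ⬝ᵥ (M *ᵥ y)) := by
      rw [dotProduct_comm]; rfl
    rw [hre]
    exact (Complex.le_def.mp h0).1

theorem stmt_16 {n : ℕ} (A B : Matrix (Fin n) (Fin n) ℂ)
    (hA : A.PosSemidef) (hB : B.PosSemidef)
    (h : opNorm (A + B) = opNorm A + opNorm B) :
    ∀ α β : ℝ, 0 ≤ α → 0 ≤ β →
      opNorm ((α : ℂ) • A + (β : ℂ) • B) = α * opNorm A + β * opNorm B := by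
  intro α β hα hβ
  set T := Matrix.toEuclideanCLM (𝕜 := ℂ) A with hTdef
  set S := Matrix.toEuclideanCLM (𝕜 := ℂ) B with hSdef
  have hTpos : T.IsPositive := pos_of_psd hA
  have hSpos : S.IsPositive := pos_of_psd hB
  have hsum : ‖T + S‖ = ‖T‖ + ‖S‖ := by
    have heq : T + S = Matrix.toEuclideanCLM (𝕜 := ℂ) (A + B) := (map_add _ _ _).symm
    rw [heq]
    exact h
  obtain ⟨x, hx1, hx2⟩ := key (T + S) (hTpos.add hSpos)
  have hsplit : re ⟪T x, x⟫ + re ⟪S x, x⟫ = ‖T‖ + ‖S‖ := by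
    rw [← map_add, ← inner_add_left, ← ContinuousLinearMap.add_apply, hx2, hsum]
  have hTx : re ⟪T x, x⟫ ≤ ‖T‖ := re_inner_le_norm' T x hx1
  have hSx : re ⟪S x, x⟫ ≤ ‖S‖ := re_inner_le_norm' S x hx1
  have hT' : re ⟪T x, x⟫ = ‖T‖ := by linarith
  have hS' : re ⟪S x, x⟫ = ‖S‖ := by linarith
  set U := (α : ℂ) • T + (β : ℂ) • S with hUdef
  have hUeq : _root_.opNorm ((α : ℂ) • A + (β : ℂ) • B) = ‖U‖ := by
    rw [hUdef, hTdef, hSdef, ← map_smul, ← map_smul, ← map_add]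
    rfl
  rw [hUeq]
  have hUx : re ⟪U x, x⟫ = α * ‖T‖ + β * ‖S‖ := by
    have happ : U x = (α : ℂ) • T x + (β : ℂ) • S x := by simp [hUdef]
    have e1 : re ⟪(α : ℂ) • T x, x⟫ = α * re ⟪T x, x⟫ := by
      rw [inner_smul_left, Complex.conj_ofReal]; exact Complex.re_ofReal_mul _ _
    have e2 : re ⟪(β : ℂ) • S x, x⟫ = β * re ⟪S x, x⟫ := by
      rw [inner_smul_left, Complex.conj_ofReal]; exact Complex.re_ofReal_mul _ _
    rw [happ, inner_add_left, map_add, e1, e2, hT', hS']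
  have hlow : α * ‖T‖ + β * ‖S‖ ≤ ‖U‖ := by
    rw [← hUx]; exact re_inner_le_norm' U x hx1
  have hup : ‖U‖ ≤ α * ‖T‖ + β * ‖S‖ := by
    calc ‖U‖ ≤ ‖(α : ℂ) • T‖ + ‖(β : ℂ) • S‖ := norm_add_le _ _
      _ = α * ‖T‖ + β * ‖S‖ := by
          rw [norm_smul ((α : ℂ)) T, norm_smul ((β : ℂ)) S, Complex.norm_real,
            Complex.norm_real, Real.norm_eq_abs, Real.norm_eq_abs,
            abs_of_nonneg hα, abs_of_nonneg hβ]
  have : opNorm A = ‖T‖ := rfl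
  rw [this, show opNorm B = ‖S‖ from rfl]
  linarith
end
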